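/- arXiv:2506.15800 — 4 statements merged into one kernel-verified Lean document; each statement's English description precedes it below -/
import Mathlib

section
/- For every n ≥ 1, there is a bijection between the set of indecomposable noncrossing nonnesting partitions of {1,...,n} and the set of indecomposable permutations of {1,...,n} avoiding 321 and 3412; in particular these two sets have the same cardinality. -/
/-- `i` and `j` lie in the same block of the set partition `P`. -/
def SameBlock {n : ℕ} (P : Finpartition (Finset.univ : Finset (Fin n)))
    (i j : Fin n) : Prop :=
  ∃ b ∈ P.parts, i ∈ b ∧ j ∈ b

/-- `(i, j)` is an arc of the arc diagram of `P`: `i < j` are in the same block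
and no element strictly between them lies in that block. -/
def IsArc {n : ℕ} (P : Finpartition (Finset.univ : Finset (Fin n)))
    (i j : Fin n) : Prop :=
  i < j ∧ SameBlock P i j ∧ ∀ m : Fin n, i < m → m < j → ¬ SameBlock P i m

/-- `P` is noncrossing: no two arcs `(i₁,j₁)`, `(i₂,j₂)` with `i₁<i₂<j₁<j₂`. -/
def Noncrossing {n : ℕ} (P : Finpartition (Finset.univ : Finset (Fin n))) : Prop :=
  ¬ ∃ i₁ j₁ i₂ j₂ : Fin n, IsArc P i₁ j₁ ∧ IsArc P i₂ j₂ ∧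
      i₁ < i₂ ∧ i₂ < j₁ ∧ j₁ < j₂

/-- `P` is nonnesting: no two arcs `(i₁,j₁)`, `(i₂,j₂)` with `i₁<i₂<j₂<j₁`. -/
def Nonnesting {n : ℕ} (P : Finpartition (Finset.univ : Finset (Fin n))) : Prop :=
  ¬ ∃ i₁ j₁ i₂ j₂ : Fin n, IsArc P i₁ j₁ ∧ IsArc P i₂ j₂ ∧
      i₁ < i₂ ∧ i₂ < j₂ ∧ j₂ < j₁

/-- `P` is indecomposable: no proper nonempty subcollection of its blocks forms
a partition of an initial segment `{1,...,k}` with `k < n`; equivalently, for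
no `0 < k < n` is every block entirely inside the first `k` elements or
entirely outside them. -/
def IndecomposableP {n : ℕ} (P : Finpartition (Finset.univ : Finset (Fin n))) : Prop :=
  ¬ ∃ k : ℕ, 0 < k ∧ k < n ∧
      ∀ b ∈ P.parts, (∀ i ∈ b, (i : ℕ) < k) ∨ (∀ i ∈ b, k ≤ (i : ℕ))

/-- `σ` avoids the pattern 321: no indices `i < j < k` with `σ i > σ j > σ k`. -/
def Avoids321 {n : ℕ} (σ : Equiv.Perm (Fin n)) : Prop :=
  ¬ ∃ i j k : Fin n, i < j ∧ j < k ∧ σ k < σ j ∧ σ j < σ i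

/-- `σ` avoids the pattern 3412: no indices `i < j < k < l` with
`σ k < σ l < σ i < σ j`. -/
def Avoids3412 {n : ℕ} (σ : Equiv.Perm (Fin n)) : Prop :=
  ¬ ∃ i j k l : Fin n, i < j ∧ j < k ∧ k < l ∧ σ k < σ l ∧ σ l < σ i ∧ σ i < σ j

/-- `σ` is indecomposable: it is not a direct sum of two nonempty permutations,
i.e. no `0 < k < n` with `σ({1,...,k}) = {1,...,k}`. -/
def IndecomposableSigma {n : ℕ} (σ : Equiv.Perm (Fin n)) : Prop :=
  ¬ ∃ k : ℕ, 0 < k ∧ k < n ∧ ∀ i : Fin n, (i : ℕ) < k → (σ i : ℕ) < k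


open Finset

namespace NCN
variable {n : ℕ}

/-- generic: same block iff in part -/
lemma sameBlock_iff_mem_part (P : Finpartition (Finset.univ : Finset (Fin n))) (i j : Fin n) :
    SameBlock P i j ↔ j ∈ P.part i := by
  constructor
  · rintro ⟨b, hb, hib, hjb⟩
    rwa [P.part_eq_of_mem hb hib]
  · intro hj
    exact ⟨P.part i, P.part_mem.2 (mem_univ i), P.mem_part (mem_univ i), hj⟩

lemma sameBlock_refl (P : Finpartition (Finset.univ : Finset (Fin n))) (i : Fin n) :
    SameBlock P i i :=
  (sameBlock_iff_mem_part P i i).2 (P.mem_part (mem_univ i))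

lemma sameBlock_symm {P : Finpartition (Finset.univ : Finset (Fin n))} {i j : Fin n}
    (h : SameBlock P i j) : SameBlock P j i := by
  obtain ⟨b, hb, hib, hjb⟩ := h; exact ⟨b, hb, hjb, hib⟩

lemma sameBlock_trans {P : Finpartition (Finset.univ : Finset (Fin n))} {i j k : Fin n}
    (h1 : SameBlock P i j) (h2 : SameBlock P j k) : SameBlock P i k := by
  obtain ⟨b, hb, hib, hjb⟩ := h1
  obtain ⟨c, hc, hjc, hkc⟩ := h2
  exact ⟨b, hb, hib, (P.eq_of_mem_parts hc hb hjc hjb) ▸ hkc⟩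

def bRel (B : Finset (Fin n)) (i j : Fin n) : Prop := i = j ∨ (i ∈ B ∧ j ∈ B)

instance (B : Finset (Fin n)) : DecidableRel (bRel B) := fun i j => by
  unfold bRel; infer_instance

def bSetoid (B : Finset (Fin n)) : Setoid (Fin n) where
  r := bRel B
  iseqv := by
    constructor
    · intro x; exact Or.inl rfl
    · rintro x y (rfl | ⟨hx, hy⟩)
      · exact Or.inl rfl
      · exact Or.inr ⟨hy, hx⟩
    · rintro x y z (rfl | ⟨hx, hy⟩) h2
      · exact h2
      · rcases h2 with rfl | ⟨_, hz⟩
        · exact Or.inr ⟨hx, hy⟩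
        · exact Or.inr ⟨hx, hz⟩

instance (B : Finset (Fin n)) : DecidableRel (bSetoid B).r :=
  inferInstanceAs (DecidableRel (bRel B))

def partOf (B : Finset (Fin n)) : Finpartition (Finset.univ : Finset (Fin n)) :=
  Finpartition.ofSetoid (bSetoid B)

lemma sameBlock_partOf {B : Finset (Fin n)} {i j : Fin n} :
    SameBlock (partOf B) i j ↔ (i = j ∨ (i ∈ B ∧ j ∈ B)) := by
  rw [sameBlock_iff_mem_part, partOf, Finpartition.mem_part_ofSetoid_iff_rel]
  exact Iff.rfl

end NCN

open Finset
set_option maxHeartbeats 1000000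

namespace NCN
variable {n : ℕ}

/-! ### partOf satisfies the three conditions -/

lemma arc_mem_partOf {B : Finset (Fin n)} {i j : Fin n} (h : IsArc (partOf B) i j) :
    i ∈ B ∧ j ∈ B := by
  obtain ⟨hij, hsb, _⟩ := h
  rcases sameBlock_partOf.1 hsb with rfl | hmem
  · exact absurd hij (lt_irrefl _)
  · exact hmem

lemma arc_partOf_no_middle {B : Finset (Fin n)} {i j x : Fin n} (h : IsArc (partOf B) i j)
    (hx : x ∈ B) (h1 : i < x) (h2 : x < j) : False :=
  h.2.2 x h1 h2 (sameBlock_partOf.2 (Or.inr ⟨(arc_mem_partOf h).1, hx⟩))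

lemma noncrossing_partOf (B : Finset (Fin n)) : Noncrossing (partOf B) := by
  rintro ⟨i1, j1, i2, j2, a1, a2, h12, h2j1, _⟩
  exact arc_partOf_no_middle a1 (arc_mem_partOf a2).1 h12 h2j1

lemma nonnesting_partOf (B : Finset (Fin n)) : Nonnesting (partOf B) := by
  rintro ⟨i1, j1, i2, j2, a1, a2, h12, h2j2, hj21⟩
  exact arc_partOf_no_middle a1 (arc_mem_partOf a2).1 h12 (lt_trans h2j2 hj21)

lemma partOf_part_zero {m : ℕ} {B : Finset (Fin (m+1))} (h0 : (0 : Fin (m+1)) ∈ B) :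
    (partOf B).part 0 = B := by
  ext x
  rw [partOf, Finpartition.mem_part_ofSetoid_iff_rel]
  show (0 : Fin (m+1)) = x ∨ _ ↔ _
  constructor
  · rintro (rfl | ⟨_, hx⟩)
    · exact h0
    · exact hx
  · intro hx; exact Or.inr ⟨h0, hx⟩

lemma indecomposableP_partOf {m : ℕ} {B : Finset (Fin (m+1))} (h0 : (0 : Fin (m+1)) ∈ B)
    (hl : Fin.last m ∈ B) : IndecomposableP (partOf B) := by
  rintro ⟨k, hk0, hkn, hall⟩
  have hBmem : B ∈ (partOf B).parts := by
    have h1 := (partOf B).part_mem.2 (mem_univ (0 : Fin (m+1)))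
    rwa [partOf_part_zero h0] at h1
  rcases hall B hBmem with h | h
  · have := h (Fin.last m) hl
    simp [Fin.last] at this
    omega
  · have := h 0 h0
    simp at this
    omega

/-! ### classification of noncrossing nonnesting indecomposable partitions -/

variable {P : Finpartition (Finset.univ : Finset (Fin n))}

/-- L1: from a same-block pair extract an arc starting at x. -/
lemma arc_of_sameBlock {x y : Fin n} (hxy : x < y) (hsb : SameBlock P x y) :
    ∃ z, x < z ∧ z ≤ y ∧ IsArc P x z := by
  classical
  set S := univ.filter (fun z => x < z ∧ SameBlock P x z) with hS
  have hyS : y ∈ S := by simp [hS, hxy, hsb]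
  have hne : S.Nonempty := ⟨y, hyS⟩
  refine ⟨S.min' hne, ?_, ?_, ?_, ?_, ?_⟩
  · exact (mem_filter.1 (S.min'_mem hne)).2.1
  · exact S.min'_le y hyS
  · exact (mem_filter.1 (S.min'_mem hne)).2.1
  · exact (mem_filter.1 (S.min'_mem hne)).2.2
  · intro w hw1 hw2 hsbw
    have : w ∈ S := by simp [hS, hw1, hsbw]
    exact absurd (S.min'_le w this) (not_le.2 hw2)

/-- L1': an arc straddling any gap spanned by a same-block pair. -/
lemma straddle_arc (g : ℕ) :
    ∀ d (x y : Fin n), (y : ℕ) - (x : ℕ) ≤ d → SameBlock P x y →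
      (x : ℕ) < g → g ≤ (y : ℕ) →
      ∃ i j, IsArc P i j ∧ SameBlock P x i ∧ (i : ℕ) < g ∧ g ≤ (j : ℕ) := by
  intro d
  induction d with
  | zero => intro x y hd _ hxg hgy; omega
  | succ d ih =>
    intro x y hd hsb hxg hgy
    have hxy : x < y := by rw [Fin.lt_def]; omega
    obtain ⟨z, hxz, hzy, harc⟩ := arc_of_sameBlock hxy hsb
    by_cases hgz : g ≤ (z : ℕ)
    · exact ⟨x, z, harc, sameBlock_refl P x, hxg, hgz⟩
    · have hzy' : (z : ℕ) ≤ (y : ℕ) := hzy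
      have hxz' : (x : ℕ) < (z : ℕ) := hxz
      have hzsb : SameBlock P z y := sameBlock_trans (sameBlock_symm harc.2.1) hsb
      obtain ⟨i, j, ha, hsb2, hig, hgj⟩ := ih z y (by omega) hzsb (by omega) hgy
      exact ⟨i, j, ha, sameBlock_trans harc.2.1 hsb2, hig, hgj⟩

/-- L2: indecomposability gives a same-block pair straddling each gap. -/
lemma straddle_exists (hInd : IndecomposableP P) (g : ℕ) (hg0 : 0 < g) (hgn : g < n) :
    ∃ x y : Fin n, SameBlock P x y ∧ (x : ℕ) < g ∧ g ≤ (y : ℕ) := by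
  by_contra hcon
  push_neg at hcon
  apply hInd
  refine ⟨g, hg0, hgn, ?_⟩
  intro b hb
  by_cases hlow : ∀ i ∈ b, (i : ℕ) < g
  · exact Or.inl hlow
  · push_neg at hlow
    obtain ⟨y, hyb, hyg⟩ := hlow
    refine Or.inr ?_
    intro x hxb
    by_contra hxg
    exact absurd hyg (not_le.2 (hcon x y ⟨b, hb, hxb, hyb⟩ (by omega)))

/-- helper : two arcs with the same left endpoint coincide on the right. -/
lemma arc_right_unique {i j1 j2 : Fin n} (a1 : IsArc P i j1) (a2 : IsArc P i j2) : j1 = j2 := by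
  rcases lt_trichotomy j1 j2 with h | h | h
  · exact absurd (a1.2.1) (a2.2.2 j1 a1.1 h)
  · exact h
  · exact absurd (a2.2.1) (a1.2.2 j2 a2.1 h)

lemma arc_straddle_helper (hNC : Noncrossing P) (hNN : Nonnesting P) {g : ℕ}
    {i1 j1 i2 j2 : Fin n} (a1 : IsArc P i1 j1) (a2 : IsArc P i2 j2)
    (h1 : (i1 : ℕ) < g ∧ g ≤ (j1 : ℕ)) (h2 : (i2 : ℕ) < g ∧ g ≤ (j2 : ℕ))
    (h12 : i1 < i2) : False := by
  have h2j1 : i2 < j1 := by rw [Fin.lt_def]; omega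
  rcases lt_trichotomy j1 j2 with h | h | h
  · exact hNC ⟨i1, j1, i2, j2, a1, a2, h12, h2j1, h⟩
  · subst h
    exact a1.2.2 i2 h12 h2j1 (sameBlock_trans a1.2.1 (sameBlock_symm a2.2.1))
  · exact hNN ⟨i1, j1, i2, j2, a1, a2, h12, a2.1, h⟩

/-- L3: the arc over a gap is unique. -/
lemma arc_straddle_unique (hNC : Noncrossing P) (hNN : Nonnesting P) {g : ℕ}
    {i1 j1 i2 j2 : Fin n} (a1 : IsArc P i1 j1) (a2 : IsArc P i2 j2)
    (h1 : (i1 : ℕ) < g ∧ g ≤ (j1 : ℕ)) (h2 : (i2 : ℕ) < g ∧ g ≤ (j2 : ℕ)) :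
    i1 = i2 ∧ j1 = j2 := by
  rcases lt_trichotomy i1 i2 with h | h | h
  · exact absurd (arc_straddle_helper hNC hNN a1 a2 h1 h2 h) not_false
  · subst h
    exact ⟨rfl, arc_right_unique a1 a2⟩
  · exact absurd (arc_straddle_helper hNC hNN a2 a1 h2 h1 h) not_false

end NCN

open Finset

namespace NCN
variable {m : ℕ} {P : Finpartition (Finset.univ : Finset (Fin (m+1)))}

/-- M : the chain lemma. For every gap there is a straddling arc whose endpoints
are in the block of 0. -/
lemma chain_arc (hNC : Noncrossing P) (hNN : Nonnesting P) (hInd : IndecomposableP P) :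
    ∀ g : ℕ, 0 < g → g < m + 1 →
      ∃ i j : Fin (m+1), IsArc P i j ∧ (i : ℕ) < g ∧ g ≤ (j : ℕ) ∧ SameBlock P 0 i := by
  intro g
  induction g with
  | zero => omega
  | succ g ih =>
    intro _ hgn
    -- an arc straddling gap g+1
    obtain ⟨x, y, hsb, hxg, hgy⟩ := straddle_exists hInd (g+1) (by omega) hgn
    obtain ⟨i', j', ha', _, hi'g, hgj'⟩ :=
      straddle_arc (g+1) ((y : ℕ) - (x : ℕ)) x y le_rfl hsb hxg hgy
    by_cases hg0 : g = 0
    · subst hg0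
      have : (i' : ℕ) = 0 := by omega
      have hi0 : i' = 0 := by
        apply Fin.ext; simpa using this
      exact ⟨i', j', ha', by omega, hgj', hi0 ▸ sameBlock_refl P i'⟩
    · obtain ⟨i, j, ha, hig, hgj, h0i⟩ := ih (by omega) (by omega)
      by_cases hj : g + 1 ≤ (j : ℕ)
      · exact ⟨i, j, ha, by omega, hj, h0i⟩
      · -- j = g, so i' must equal j
        have hjg : (j : ℕ) = g := by omega
        by_cases hi' : (i' : ℕ) < g
        · obtain ⟨_, hj2⟩ := arc_straddle_unique hNC hNN ha ha' ⟨hig, hgj⟩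
            ⟨hi', by omega⟩
          omega
        · have : i' = j := by apply Fin.ext; omega
          refine ⟨i', j', ha', hi'g, hgj', ?_⟩
          rw [this]
          exact sameBlock_trans h0i ha.2.1
  
/-- classification : any same-block pair lies in the block of 0. -/
lemma sameBlock_zero (hNC : Noncrossing P) (hNN : Nonnesting P) (hInd : IndecomposableP P)
    {x y : Fin (m+1)} (hxy : x < y) (hsb : SameBlock P x y) : SameBlock P 0 x := by
  have hxy' : (x : ℕ) < (y : ℕ) := hxy
  obtain ⟨i, j, ha, hig, hgj, h0i⟩ := chain_arc hNC hNN hInd ((x : ℕ) + 1) (by omega)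
    (by have := y.isLt; omega)
  obtain ⟨z, hxz, hzy, harc⟩ := arc_of_sameBlock hxy hsb
  have hxz' : (x : ℕ) < (z : ℕ) := hxz
  obtain ⟨hi, _⟩ := arc_straddle_unique hNC hNN ha harc ⟨hig, hgj⟩ ⟨by omega, by omega⟩
  rw [← hi]
  exact h0i

lemma sameBlock_iff_classified (hNC : Noncrossing P) (hNN : Nonnesting P)
    (hInd : IndecomposableP P) (i j : Fin (m+1)) :
    SameBlock P i j ↔ (i = j ∨ (i ∈ P.part 0 ∧ j ∈ P.part 0)) := by
  constructor
  · intro hsb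
    rcases lt_trichotomy i j with h | h | h
    · refine Or.inr ⟨?_, ?_⟩
      · exact (sameBlock_iff_mem_part P 0 i).1 (sameBlock_zero hNC hNN hInd h hsb)
      · exact (sameBlock_iff_mem_part P 0 j).1
          (sameBlock_trans (sameBlock_zero hNC hNN hInd h hsb) hsb)
    · exact Or.inl h
    · refine Or.inr ⟨?_, ?_⟩
      · exact (sameBlock_iff_mem_part P 0 i).1
          (sameBlock_trans (sameBlock_zero hNC hNN hInd h (sameBlock_symm hsb)) (sameBlock_symm hsb))
      · exact (sameBlock_iff_mem_part P 0 j).1 (sameBlock_zero hNC hNN hInd h (sameBlock_symm hsb))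
  · rintro (rfl | ⟨hi, hj⟩)
    · exact sameBlock_refl P i
    · exact ⟨P.part 0, P.part_mem.2 (mem_univ _), hi, hj⟩

/-- two finpartitions of univ with the same same-block relation are equal -/
lemma eq_of_sameBlock_iff {P Q : Finpartition (Finset.univ : Finset (Fin (m+1)))}
    (h : ∀ i j, SameBlock P i j ↔ SameBlock Q i j) : P = Q := by
  have hpart : ∀ x, P.part x = Q.part x := by
    intro x
    ext j
    rw [← sameBlock_iff_mem_part, ← sameBlock_iff_mem_part]
    exact h x j
  ext b
  constructor
  · intro hb
    obtain ⟨x, hxb⟩ := P.nonempty_of_mem_parts hb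
    have : P.part x = b := P.part_eq_of_mem hb hxb
    rw [← this, hpart]
    exact Q.part_mem.2 (mem_univ _)
  · intro hb
    obtain ⟨x, hxb⟩ := Q.nonempty_of_mem_parts hb
    have : Q.part x = b := Q.part_eq_of_mem hb hxb
    rw [← this, ← hpart]
    exact P.part_mem.2 (mem_univ _)

/-- final classification -/
lemma partition_eq_partOf (hNC : Noncrossing P) (hNN : Nonnesting P)
    (hInd : IndecomposableP P) : P = partOf (P.part 0) := by
  apply eq_of_sameBlock_iff
  intro i j
  rw [sameBlock_partOf, sameBlock_iff_classified hNC hNN hInd]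

lemma last_mem_part_zero (hNC : Noncrossing P) (hNN : Nonnesting P)
    (hInd : IndecomposableP P) : Fin.last m ∈ P.part 0 := by
  by_cases hm : m = 0
  · subst hm
    have : Fin.last 0 = (0 : Fin 1) := rfl
    rw [this]
    exact P.mem_part (mem_univ _)
  · obtain ⟨i, j, ha, hig, hgj, h0i⟩ := chain_arc hNC hNN hInd m (by omega) (by omega)
    have hj : j = Fin.last m := by
      apply Fin.ext
      have := j.isLt
      simp [Fin.last]
      omega
    rw [← hj]
    exact (sameBlock_iff_mem_part P 0 j).1 (sameBlock_trans h0i ha.2.1)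

lemma zero_mem_part_zero : (0 : Fin (m+1)) ∈ P.part 0 := P.mem_part (mem_univ _)

end NCN

open Finset

namespace NCN
variable {m : ℕ}

/-- membership condition for the "up" branch -/
def EP (B : Finset (Fin (m+1))) (i : Fin (m+1)) : Prop := i ∈ B ∧ i ≠ Fin.last m

instance (B : Finset (Fin (m+1))) (i : Fin (m+1)) : Decidable (EP B i) := by
  unfold EP; infer_instance

/-- the canonical permutation attached to `B` : go up along `B`, down along the complement. -/
def sigmaFun (B : Finset (Fin (m+1))) (i : Fin (m+1)) : Fin (m+1) :=
  if EP B i then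
    (if h : (B.filter (fun b => i < b)).Nonempty then (B.filter (fun b => i < b)).min' h else i)
  else
    (if h : ((Bᶜ).filter (fun x => x < i)).Nonempty then ((Bᶜ).filter (fun x => x < i)).max' h
     else 0)

variable {B : Finset (Fin (m+1))}

lemma sig_up (hl : Fin.last m ∈ B) {i : Fin (m+1)} (hi : EP B i) :
    sigmaFun B i ∈ B ∧ i < sigmaFun B i ∧ ∀ b ∈ B, i < b → sigmaFun B i ≤ b := by
  have hne : (B.filter (fun b => i < b)).Nonempty := by
    refine ⟨Fin.last m, mem_filter.2 ⟨hl, ?_⟩⟩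
    exact lt_of_le_of_ne (Fin.le_last i) hi.2
  rw [sigmaFun, if_pos hi, dif_pos hne]
  have hmem := mem_filter.1 ((B.filter (fun b => i < b)).min'_mem hne)
  refine ⟨hmem.1, hmem.2, ?_⟩
  intro b hb hib
  exact min'_le _ b (mem_filter.2 ⟨hb, hib⟩)

lemma sig_down (h0 : (0 : Fin (m+1)) ∈ B) {i : Fin (m+1)} (hi : ¬ EP B i) :
    (sigmaFun B i ∈ Bᶜ ∨ sigmaFun B i = 0) ∧ (i ≠ 0 → sigmaFun B i < i) ∧
      ∀ c ∈ Bᶜ, c < i → c ≤ sigmaFun B i := by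
  rw [sigmaFun, if_neg hi]
  by_cases hne : ((Bᶜ).filter (fun x => x < i)).Nonempty
  · rw [dif_pos hne]
    have hmem := mem_filter.1 (((Bᶜ).filter (fun x => x < i)).max'_mem hne)
    refine ⟨Or.inl hmem.1, fun _ => hmem.2, ?_⟩
    intro c hc hci
    exact (Bᶜ.filter (fun x => x < i)).le_max' c (mem_filter.2 ⟨hc, hci⟩)
  · rw [dif_neg hne]
    refine ⟨Or.inr rfl, ?_, ?_⟩
    · intro hi0
      exact (Fin.pos_iff_ne_zero' i).2 hi0
    · intro c hc hci
      exact absurd ⟨c, mem_filter.2 ⟨hc, hci⟩⟩ hne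

lemma not_EP_not_mem (h0 : (0 : Fin (m+1)) ∈ B) {i : Fin (m+1)} (hi : ¬ EP B i)
    (hil : i ≠ Fin.last m) : i ∈ Bᶜ := by
  rw [EP] at hi
  push_neg at hi
  rcases em (i ∈ B) with h | h
  · exact absurd (hi h) (by simpa using hil)
  · simpa using h

lemma not_EP_ne_zero (h0 : (0 : Fin (m+1)) ∈ B) (hm : m ≠ 0) {i : Fin (m+1)}
    (hi : ¬ EP B i) : i ≠ 0 := by
  intro h
  subst h
  apply hi
  refine ⟨h0, ?_⟩
  intro h
  have := congrArg (Fin.val) h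
  simp [Fin.last] at this
  omega

lemma sig_mono_E (hl : Fin.last m ∈ B) {i j : Fin (m+1)} (hij : i < j)
    (hi : EP B i) (hj : EP B j) : sigmaFun B i < sigmaFun B j := by
  have h1 := sig_up hl hi
  have h2 := sig_up hl hj
  calc sigmaFun B i ≤ j := h1.2.2 j hj.1 hij
  _ < sigmaFun B j := h2.2.1

lemma sig_mono_F (h0 : (0 : Fin (m+1)) ∈ B) {i j : Fin (m+1)} (hij : i < j)
    (hi : ¬ EP B i) (hj : ¬ EP B j) : sigmaFun B i < sigmaFun B j := by
  have hiBc : i ∈ Bᶜ := not_EP_not_mem h0 hi (by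
    intro h; subst h; exact absurd hij (not_lt.2 (Fin.le_last j)))
  have hi0 : i ≠ 0 := by
    intro h; subst h; simp at hiBc; exact hiBc h0
  have h1 := sig_down h0 hi
  have h2 := sig_down h0 hj
  calc sigmaFun B i < i := h1.2.1 hi0
  _ ≤ sigmaFun B j := h2.2.2 i hiBc hij

lemma sig_injOn_aux (h0 : (0 : Fin (m+1)) ∈ B) (hl : Fin.last m ∈ B) {i j : Fin (m+1)}
    (hij : i < j) : sigmaFun B i ≠ sigmaFun B j := by
  by_cases hi : EP B i <;> by_cases hj : EP B j
  · exact ne_of_lt (sig_mono_E hl hij hi hj)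
  · -- i up, j down
    intro heq
    have h1 := sig_up hl hi
    have h2 := sig_down h0 hj
    rcases h2.1 with hc | hc
    · rw [heq] at h1; simp at hc; exact hc h1.1
    · rw [heq, hc] at h1
      exact absurd h1.2.1 (not_lt.2 (Fin.zero_le i))
  · intro heq
    have h1 := sig_down h0 hi
    have h2 := sig_up hl hj
    rcases h1.1 with hc | hc
    · rw [heq] at hc; simp at hc; exact hc h2.1
    · rw [hc] at heq
      exact absurd (heq ▸ h2.2.1) (not_lt.2 (Fin.zero_le j))
  · exact ne_of_lt (sig_mono_F h0 hij hi hj)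

lemma sig_injective (h0 : (0 : Fin (m+1)) ∈ B) (hl : Fin.last m ∈ B) :
    Function.Injective (sigmaFun B) := by
  intro i j heq
  rcases lt_trichotomy i j with h | h | h
  · exact absurd heq (sig_injOn_aux h0 hl h)
  · exact h
  · exact absurd heq.symm (sig_injOn_aux h0 hl h)

/-- the permutation -/
noncomputable def sigmaPerm (B : Finset (Fin (m+1))) (h0 : (0 : Fin (m+1)) ∈ B)
    (hl : Fin.last m ∈ B) : Equiv.Perm (Fin (m+1)) :=
  Equiv.ofBijective (sigmaFun B) (Finite.injective_iff_bijective.1 (sig_injective h0 hl))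

@[simp] lemma sigmaPerm_apply (h0 : (0 : Fin (m+1)) ∈ B) (hl : Fin.last m ∈ B) (i : Fin (m+1)) :
    sigmaPerm B h0 hl i = sigmaFun B i := rfl

end NCN

open Finset

namespace NCN
variable {m : ℕ} {B : Finset (Fin (m+1))}

lemma avoids321_sigmaPerm (h0 : (0 : Fin (m+1)) ∈ B) (hl : Fin.last m ∈ B) :
    Avoids321 (sigmaPerm B h0 hl) := by
  rintro ⟨i, j, k, hij, hjk, h1, h2⟩
  simp only [sigmaPerm_apply] at h1 h2
  by_cases hi : EP B i <;> by_cases hj : EP B j <;> by_cases hk : EP B k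
  · exact absurd (sig_mono_E hl hij hi hj) (not_lt.2 (le_of_lt h2))
  · exact absurd (sig_mono_E hl hij hi hj) (not_lt.2 (le_of_lt h2))
  · exact absurd (sig_mono_E hl (lt_trans hij hjk) hi hk)
      (not_lt.2 (le_of_lt (lt_trans h1 h2)))
  · exact absurd (sig_mono_F h0 hjk hj hk) (not_lt.2 (le_of_lt h1))
  · exact absurd (sig_mono_E hl hjk hj hk) (not_lt.2 (le_of_lt h1))
  · exact absurd (sig_mono_F h0 (lt_trans hij hjk) hi hk)
      (not_lt.2 (le_of_lt (lt_trans h1 h2)))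
  · exact absurd (sig_mono_F h0 hij hi hj) (not_lt.2 (le_of_lt h2))
  · exact absurd (sig_mono_F h0 hij hi hj) (not_lt.2 (le_of_lt h2))

lemma avoids3412_sigmaPerm (h0 : (0 : Fin (m+1)) ∈ B) (hl : Fin.last m ∈ B) :
    Avoids3412 (sigmaPerm B h0 hl) := by
  rintro ⟨i, j, k, l, hij, hjk, hkl, h1, h2, h3⟩
  simp only [sigmaPerm_apply] at h1 h2 h3
  -- descending pairs force different classes
  have diff : ∀ x y : Fin (m+1), x < y → sigmaFun B y < sigmaFun B x →
      ¬ (EP B x ↔ EP B y) := by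
    intro x y hxy hlt hiff
    by_cases hx : EP B x
    · exact absurd (sig_mono_E hl hxy hx (hiff.1 hx)) (not_lt.2 (le_of_lt hlt))
    · exact absurd (sig_mono_F h0 hxy hx (fun h => hx (hiff.2 h))) (not_lt.2 (le_of_lt hlt))
  have dik := diff i k (lt_trans hij hjk) (lt_trans h1 h2)
  have dil := diff i l (lt_trans (lt_trans hij hjk) hkl) h2
  have djk := diff j k hjk (lt_trans (lt_trans h1 h2) h3)
  have hkl' : ¬ (EP B k ↔ EP B l) → False := by
    intro hq
    by_cases hk : EP B k <;> by_cases hlc : EP B l <;> tauto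
  by_cases hi : EP B i <;> by_cases hk : EP B k
  · exact dik (by tauto)
  · -- i,j ∈ E ; k,l ∈ F
    have hj : EP B j := by by_contra hj; exact djk (by tauto)
    have hlc : ¬ EP B l := by by_contra hlc; exact dil (by tauto)
    -- σ i ≤ j since j ∈ B above i
    have hsi : sigmaFun B i ≤ j := (sig_up hl hi).2.2 j hj.1 hij
    -- k ∈ Bᶜ and k < l so σ l ≥ k
    have hkBc : k ∈ Bᶜ := not_EP_not_mem h0 hk (by
      intro h; subst h; exact absurd hkl (not_lt.2 (Fin.le_last l)))
    have hsl : k ≤ sigmaFun B l := (sig_down h0 hlc).2.2 k hkBc hkl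
    have : sigmaFun B i < sigmaFun B i := by
      calc sigmaFun B i ≤ j := hsi
      _ < k := hjk
      _ ≤ sigmaFun B l := hsl
      _ < sigmaFun B i := h2
    exact absurd this (lt_irrefl _)
  · -- i ∈ F, k ∈ E : σ k > k > j > i > σ i contradicts σ k < σ i
    have hi0 : i ≠ 0 := by
      intro h
      subst h
      exact hi ⟨h0, by
        intro h
        have hc := congrArg Fin.val h
        simp [Fin.last] at hc
        have := k.isLt
        have h1' : (0 : Fin (m+1)) < j := hij
        have h2' : j < k := hjk
        rw [Fin.lt_def] at h1' h2'
        omega⟩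
    have hsi : sigmaFun B i < i := (sig_down h0 hi).2.1 hi0
    have hsk : k < sigmaFun B k := (sig_up hl hk).2.1
    have : sigmaFun B k < sigmaFun B k := by
      calc sigmaFun B k < sigmaFun B l := h1
      _ < sigmaFun B i := h2
      _ < i := hsi
      _ < k := lt_trans hij hjk
      _ < sigmaFun B k := hsk
    exact absurd this (lt_irrefl _)
  · exact dik (by tauto)

lemma indecomposable_sigmaPerm (h0 : (0 : Fin (m+1)) ∈ B) (hl : Fin.last m ∈ B) :
    IndecomposableSigma (sigmaPerm B h0 hl) := by
  rintro ⟨k, hk0, hkn, hall⟩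
  have hne : (B.filter (fun x : Fin (m+1) => (x : ℕ) < k)).Nonempty := by
    refine ⟨0, mem_filter.2 ⟨h0, ?_⟩⟩
    simpa using hk0
  set e := (B.filter (fun x : Fin (m+1) => (x : ℕ) < k)).max' hne with he
  have hemem := mem_filter.1 ((B.filter (fun x : Fin (m+1) => (x : ℕ) < k)).max'_mem hne)
  have heB : e ∈ B := hemem.1
  have hek : (e : ℕ) < k := hemem.2
  have hel : e ≠ Fin.last m := by
    intro h
    have := congrArg Fin.val h
    simp [Fin.last] at this
    omega
  have hup := sig_up hl ⟨heB, hel⟩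
  have hσ := hall e hek
  simp only [sigmaPerm_apply] at hσ
  -- σ e ∈ B with value < k, contradicting maximality since σ e > e
  have : sigmaFun B e ∈ B.filter (fun x : Fin (m+1) => (x : ℕ) < k) := mem_filter.2 ⟨hup.1, hσ⟩
  have hle := (B.filter (fun x : Fin (m+1) => (x : ℕ) < k)).le_max' _ this
  rw [← he] at hle
  exact absurd hup.2.1 (not_lt.2 hle)

/-- recovering B from its permutation -/
lemma sigmaPerm_recover (h0 : (0 : Fin (m+1)) ∈ B) (hl : Fin.last m ∈ B) :
    insert (Fin.last m) (univ.filter (fun i => i < sigmaPerm B h0 hl i)) = B := by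
  ext x
  simp only [mem_insert, mem_filter, mem_univ, true_and, sigmaPerm_apply]
  constructor
  · rintro (rfl | hx)
    · exact hl
    · by_contra hxB
      have hx' : ¬ EP B x := fun h => hxB h.1
      rcases em (x = 0) with rfl | hx0
      · exact hxB h0
      · exact absurd (lt_trans (mem_filter.1 hx).2 ((sig_down h0 hx').2.1 hx0)) (lt_irrefl _)
  · intro hxB
    rcases em (x = Fin.last m) with rfl | hxl
    · exact Or.inl rfl
    · exact Or.inr (mem_filter.2 ⟨mem_univ _, (sig_up hl ⟨hxB, hxl⟩).2.1⟩)

end NCN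

open Finset

namespace NCN
variable {n : ℕ} {σ : Equiv.Perm (Fin n)}

/-- counting : the number of positions with value < c is c -/
lemma card_val_lt (σ : Equiv.Perm (Fin n)) (c : Fin n) :
    (univ.filter (fun z => σ z < c)).card = (c : ℕ) := by
  have himg : univ.filter (fun z => σ z < c) = (univ.filter (fun y => y < c)).image σ.symm := by
    ext z
    simp only [mem_filter, mem_univ, true_and, mem_image]
    constructor
    · intro h; exact ⟨σ z, h, σ.symm_apply_apply z⟩
    · rintro ⟨y, hy, rfl⟩; simpa using hy
  rw [himg, card_image_of_injective _ σ.symm.injective]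
  have : univ.filter (fun y => y < c) = Iio c := by ext y; simp
  rw [this, Fin.card_Iio]

lemma card_val_le (σ : Equiv.Perm (Fin n)) (c : Fin n) :
    (univ.filter (fun z => σ z ≤ c)).card = (c : ℕ) + 1 := by
  have himg : univ.filter (fun z => σ z ≤ c) = (univ.filter (fun y => y ≤ c)).image σ.symm := by
    ext z
    simp only [mem_filter, mem_univ, true_and, mem_image]
    constructor
    · intro h; exact ⟨σ z, h, σ.symm_apply_apply z⟩
    · rintro ⟨y, hy, rfl⟩; simpa using hy
  rw [himg, card_image_of_injective _ σ.symm.injective]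
  have : univ.filter (fun y => y ≤ c) = Iic c := by ext y; simp
  rw [this, Fin.card_Iic]

/-- weak excedances appear in increasing order in a 321-avoiding permutation -/
lemma monoE (hA : Avoids321 σ) {x y : Fin n} (hxy : x < y) (hy : (y : ℕ) ≤ (σ y : ℕ))
    (hlt : σ y < σ x) : False := by
  by_cases h : ∃ z, y < z ∧ σ z < σ y
  · obtain ⟨z, hz1, hz2⟩ := h
    exact hA ⟨x, y, z, hxy, hz1, hz2, hlt⟩
  · push_neg at h
    have hsub : univ.filter (fun z => σ z < σ y) ⊆ (Iio y).erase x := by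
      intro z hz
      simp only [mem_filter, mem_univ, true_and] at hz
      rw [mem_erase, mem_Iio]
      refine ⟨?_, ?_⟩
      · rintro rfl; exact absurd hlt (not_lt.2 (le_of_lt hz))
      · rcases lt_trichotomy z y with h' | h' | h'
        · exact h'
        · subst h'; exact absurd hz (lt_irrefl _)
        · exact absurd hz (not_lt.2 (h z h'))
    have hcard := card_le_card hsub
    rw [card_val_lt] at hcard
    rw [card_erase_of_mem (by simpa using hxy), Fin.card_Iio] at hcard
    have hxy' : (x : ℕ) < (y : ℕ) := hxy
    omega

/-- weak deficiencies appear in increasing order in a 321-avoiding permutation -/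
lemma monoF (hA : Avoids321 σ) {x y : Fin n} (hxy : x < y) (hx : (σ x : ℕ) ≤ (x : ℕ))
    (hlt : σ y < σ x) : False := by
  by_cases h : ∃ z, z < x ∧ σ x < σ z
  · obtain ⟨z, hz1, hz2⟩ := h
    exact hA ⟨z, x, y, hz1, hxy, hlt, hz2⟩
  · push_neg at h
    have hsub : insert y (Iio x) ⊆ univ.filter (fun z => σ z < σ x) := by
      intro z hz
      simp only [mem_filter, mem_univ, true_and]
      rcases mem_insert.1 hz with rfl | hz'
      · exact hlt
      · rw [mem_Iio] at hz'
        rcases lt_or_eq_of_le (h z hz') with h' | h'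
        · exact h'
        · exact absurd (σ.injective h'.symm) (ne_of_gt hz')
    have hcard := card_le_card hsub
    rw [card_val_lt, card_insert_of_notMem (by simp; exact le_of_lt hxy),
      Fin.card_Iio] at hcard
    omega

end NCN

open Finset

namespace NCN
variable {m : ℕ} {σ : Equiv.Perm (Fin (m+1))}

lemma no_fixed (hA : Avoids321 σ) (hI : IndecomposableSigma σ) (hm : m ≠ 0) (i : Fin (m+1)) :
    σ i ≠ i := by
  intro hfix
  rcases Nat.lt_trichotomy 0 (i : ℕ) with hi0 | hi0 | hi0
  · rcases Nat.lt_trichotomy (i : ℕ) m with him | him | him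
    · -- interior fixed point
      have hex : ∃ j : Fin (m+1), (j : ℕ) < (i : ℕ) ∧ (i : ℕ) ≤ (σ j : ℕ) := by
        by_contra hcon
        push_neg at hcon
        exact hI ⟨(i : ℕ), hi0, by omega, fun j hj => hcon j hj⟩
      obtain ⟨j, hji, hij⟩ := hex
      have hσji : (i : ℕ) < (σ j : ℕ) := by
        rcases lt_or_eq_of_le hij with h | h
        · exact h
        · exfalso
          have : σ j = σ i := by rw [hfix]; exact Fin.ext h.symm
          have := σ.injective this
          omega
      by_cases hz : ∃ z, i < z ∧ σ z < σ i
      · obtain ⟨z, hz1, hz2⟩ := hz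
        exact hA ⟨j, i, z, by rw [Fin.lt_def]; omega, hz1, hz2, by rw [Fin.lt_def, hfix]; omega⟩
      · push_neg at hz
        have hsub : univ.filter (fun z => σ z < σ i) ⊆ (Iio i).erase j := by
          intro z hzm
          simp only [mem_filter, mem_univ, true_and] at hzm
          rw [mem_erase, mem_Iio]
          constructor
          · rintro rfl
            rw [Fin.lt_def, hfix] at hzm
            omega
          · rcases lt_trichotomy z i with h' | h' | h'
            · exact h'
            · subst h'; exact absurd hzm (lt_irrefl _)
            · exact absurd hzm (not_lt.2 (hz z h'))
        have hcard := card_le_card hsub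
        rw [card_val_lt, card_erase_of_mem (by rw [mem_Iio, Fin.lt_def]; omega),
          Fin.card_Iio, hfix] at hcard
        omega
    · -- i = last
      apply hI
      refine ⟨m, by omega, by omega, ?_⟩
      intro j hj
      have hle : (σ j : ℕ) ≤ m := by have := (σ j).isLt; omega
      rcases lt_or_eq_of_le hle with h | h
      · exact h
      · exfalso
        have : σ j = σ i := by rw [hfix]; exact Fin.ext (by omega)
        have := σ.injective this
        omega
    · have := i.isLt; omega
  · -- i = 0
    apply hI
    refine ⟨1, by omega, by omega, ?_⟩
    intro j hj
    have : j = i := Fin.ext (by omega)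
    subst this
    rw [hfix]
    omega
  · omega

/-- the candidate chain set extracted from a permutation -/
def bOf (σ : Equiv.Perm (Fin (m+1))) : Finset (Fin (m+1)) :=
  insert (Fin.last m) (univ.filter (fun i => i < σ i))

lemma bOf_last_mem : Fin.last m ∈ bOf σ := mem_insert_self _ _

lemma mem_bOf_of_lt {x : Fin (m+1)} (h : x < σ x) : x ∈ bOf σ :=
  mem_insert_of_mem (mem_filter.2 ⟨mem_univ _, h⟩)

lemma lt_of_mem_bOf {x : Fin (m+1)} (h : x ∈ bOf σ) (hx : x ≠ Fin.last m) : x < σ x := by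
  rcases mem_insert.1 h with h' | h'
  · exact absurd h' hx
  · exact (mem_filter.1 h').2

lemma bOf_zero_mem (hA : Avoids321 σ) (hI : IndecomposableSigma σ) :
    (0 : Fin (m+1)) ∈ bOf σ := by
  by_cases hm : m = 0
  · subst hm
    have : (0 : Fin 1) = Fin.last 0 := rfl
    rw [this]
    exact bOf_last_mem
  · exact mem_bOf_of_lt ((Fin.pos_iff_ne_zero' (σ 0)).2 (no_fixed hA hI hm 0))

lemma le_of_not_EP_bOf {x : Fin (m+1)} (h : ¬ EP (bOf σ) x) : σ x ≤ x := by
  by_cases hx : x = Fin.last m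
  · subst hx; exact Fin.le_last _
  · by_contra hc
    exact h ⟨mem_bOf_of_lt (not_le.1 hc), hx⟩

/-- classification on the up-set : `σ` agrees with `sigmaFun (bOf σ)` there. -/
lemma sigma_on_E (hA : Avoids321 σ) (hB : Avoids3412 σ) (hI : IndecomposableSigma σ)
    {i : Fin (m+1)} (hi : i ∈ bOf σ) (hil : i ≠ Fin.last m) :
    σ i = sigmaFun (bOf σ) i := by
  have hl : Fin.last m ∈ bOf σ := bOf_last_mem
  have hiE : i < σ i := lt_of_mem_bOf hi hil
  have hup := sig_up hl (⟨hi, hil⟩ : EP (bOf σ) i)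
  set ν := sigmaFun (bOf σ) i with hν
  rcases lt_trichotomy (σ i) ν with hc | hc | hc
  · -- σ i < ν : contradicts indecomposability at cut (σ i) + 1
    exfalso
    apply hI
    have hνm : (ν : ℕ) ≤ m := by have := ν.isLt; omega
    have hσν : (σ i : ℕ) < (ν : ℕ) := hc
    refine ⟨(σ i : ℕ) + 1, by omega, by omega, ?_⟩
    intro x hx
    have hx' : (x : ℕ) ≤ (σ i : ℕ) := by omega
    by_cases hxE : x < σ x
    · by_cases hxi : (x : ℕ) ≤ (i : ℕ)
      · rcases lt_or_eq_of_le hxi with h' | h'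
        · -- x < i : use monotonicity of weak excedances
          by_contra hcc
          have hgt : σ i < σ x := by rw [Fin.lt_def]; omega
          exact monoE hA (show x < i by rwa [Fin.lt_def]) (le_of_lt hiE) hgt
        · have : x = i := Fin.ext h'
          subst this
          omega
      · -- i < x ≤ σ i < ν contradicts minimality of ν
        exfalso
        have hxB : x ∈ bOf σ := mem_bOf_of_lt hxE
        have h5 := hup.2.2 x hxB (show i < x by rw [Fin.lt_def]; omega)
        have : (ν : ℕ) ≤ (x : ℕ) := h5
        omega
    · have : (σ x : ℕ) ≤ (x : ℕ) := not_lt.1 (fun h => hxE (by rwa [Fin.lt_def]))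
      omega
  · exact hc
  · -- ν < σ i : produces a 3412 pattern
    exfalso
    set j := ν with hj
    have hjB : j ∈ bOf σ := hup.1
    have hij : i < j := hup.2.1
    have hjl : j ≠ Fin.last m := by
      intro h
      have h1 : (j : ℕ) = m := by rw [h]; simp [Fin.last]
      have h2 : (j : ℕ) < (σ i : ℕ) := hc
      have := (σ i).isLt
      omega
    have hjE : j < σ j := lt_of_mem_bOf hjB hjl
    have hσij : σ i < σ j := by
      rcases lt_trichotomy (σ i) (σ j) with h' | h' | h'
      · exact h'
      · exact absurd (σ.injective h') (ne_of_lt hij)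
      · exact absurd (monoE hA hij (le_of_lt hjE) h') not_false
    -- two positions beyond j with values ≤ j
    set L := univ.filter (fun z => σ z ≤ j) with hL
    have hcardL : L.card = (j : ℕ) + 1 := card_val_le σ j
    have hsub : L ∩ Iic j ⊆ ((Iic j).erase i).erase j := by
      intro z hz
      rw [mem_inter, hL, mem_filter] at hz
      obtain ⟨⟨_, hzval⟩, hzpos⟩ := hz
      rw [mem_erase, mem_erase]
      refine ⟨?_, ?_, hzpos⟩
      · rintro rfl
        exact absurd hzval (not_le.2 (lt_trans hc hσij))
      · rintro rfl
        exact absurd hzval (not_le.2 hc)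
    have hcard1 : (((Iic j).erase i).erase j).card = (j : ℕ) - 1 := by
      rw [card_erase_of_mem, card_erase_of_mem, Fin.card_Iic]
      · omega
      · rw [mem_Iic]; exact le_of_lt hij
      · rw [mem_erase]
        exact ⟨(ne_of_lt hij).symm, by rw [mem_Iic]⟩
    have hsplit := card_inter_add_card_sdiff L (Iic j)
    have h2 : 1 < (L \ Iic j).card := by
      have := card_le_card hsub
      omega
    obtain ⟨a, ha, b, hb, hab⟩ := one_lt_card.1 h2
    rw [mem_sdiff, hL, mem_filter, mem_Iic] at ha hb
    obtain ⟨⟨_, hav⟩, hap⟩ := ha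
    obtain ⟨⟨_, hbv⟩, hbp⟩ := hb
    rw [not_le] at hap hbp
    -- order a and b
    have key : ∀ k l : Fin (m+1), j < k → k < l → σ k ≤ j → σ l ≤ j → False := by
      intro k l hjk hkl hkv hlv
      have hσkl : σ k < σ l := by
        rcases lt_trichotomy (σ k) (σ l) with h' | h' | h'
        · exact h'
        · exact absurd (σ.injective h') (ne_of_lt hkl)
        · exfalso
          apply monoF hA hkl ?_ h'
          have h1 : (σ k : ℕ) ≤ (j : ℕ) := hkv
          have h2 : (j : ℕ) < (k : ℕ) := hjk
          omega
      exact hB ⟨i, j, k, l, hij, hjk, hkl, hσkl,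
        lt_of_le_of_lt hlv hc, hσij⟩
    rcases lt_trichotomy a b with h' | h' | h'
    · exact key a b hap h' hav hbv
    · exact absurd h' hab
    · exact key b a hbp h' hbv hav

end NCN

open Finset

namespace NCN
variable {m : ℕ}

/-- two strictly monotone maps on a finset with the same image agree -/
lemma strictMonoOn_image_unique :
    ∀ (N : ℕ) (S : Finset (Fin (m+1))) (f g : Fin (m+1) → Fin (m+1)),
      S.card = N →
      (∀ a ∈ S, ∀ b ∈ S, a < b → f a < f b) →
      (∀ a ∈ S, ∀ b ∈ S, a < b → g a < g b) →
      S.image f = S.image g → ∀ x ∈ S, f x = g x := by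
  intro N
  induction N with
  | zero =>
    intro S f g hcard _ _ _ x hx
    rw [card_eq_zero] at hcard
    subst hcard
    exact absurd hx (notMem_empty x)
  | succ N ih =>
    intro S f g hcard hf hg himg x hx
    have hne : S.Nonempty := ⟨x, hx⟩
    set x0 := S.min' hne with hx0
    have hx0S : x0 ∈ S := S.min'_mem hne
    have hmin : ∀ (h : Fin (m+1) → Fin (m+1)),
        (∀ a ∈ S, ∀ b ∈ S, a < b → h a < h b) →
        h x0 = (S.image h).min' (hne.image h) := by
      intro h hmono
      apply le_antisymm
      · obtain ⟨a, haS, hfa⟩ := mem_image.1 ((S.image h).min'_mem (hne.image h))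
        rw [← hfa]
        rcases lt_or_eq_of_le (S.min'_le a haS) with h' | h'
        · exact le_of_lt (hmono x0 hx0S a haS h')
        · exact le_of_eq (congrArg h (hx0.trans h'))
      · exact min'_le _ _ (mem_image_of_mem h hx0S)
    have heq0 : f x0 = g x0 := by
      rw [hmin f hf, hmin g hg]
      congr 1
    -- now recurse on S.erase x0
    have hSe : (S.erase x0).card = N := by
      rw [card_erase_of_mem hx0S, hcard]
      omega
    have himg_erase : ∀ (h : Fin (m+1) → Fin (m+1)),
        (∀ a ∈ S, ∀ b ∈ S, a < b → h a < h b) →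
        (S.erase x0).image h = (S.image h).erase (h x0) := by
      intro h hmono
      have hinj : ∀ a ∈ S, ∀ b ∈ S, h a = h b → a = b := by
        intro a ha b hb heq
        rcases lt_trichotomy a b with h' | h' | h'
        · exact absurd heq (ne_of_lt (hmono a ha b hb h'))
        · exact h'
        · exact absurd heq.symm (ne_of_lt (hmono b hb a ha h'))
      ext y
      simp only [mem_image, mem_erase]
      constructor
      · rintro ⟨a, ha, rfl⟩
        exact ⟨fun hc => ha.1 (hinj a ha.2 x0 hx0S hc), a, ha.2, rfl⟩
      · rintro ⟨hy, a, ha, rfl⟩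
        exact ⟨a, ⟨fun hc => hy (by rw [hc]), ha⟩, rfl⟩
    have himg' : (S.erase x0).image f = (S.erase x0).image g := by
      rw [himg_erase f hf, himg_erase g hg, himg, heq0]
    have hmono' : ∀ (h : Fin (m+1) → Fin (m+1)),
        (∀ a ∈ S, ∀ b ∈ S, a < b → h a < h b) →
        (∀ a ∈ S.erase x0, ∀ b ∈ S.erase x0, a < b → h a < h b) := by
      intro h hmono a ha b hb hab
      exact hmono a (mem_of_mem_erase ha) b (mem_of_mem_erase hb) hab
    rcases eq_or_ne x x0 with rfl | hxx0
    · exact heq0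
    · exact ih (S.erase x0) f g hSe (hmono' f hf) (hmono' g hg) himg'
        x (mem_erase.2 ⟨hxx0, hx⟩)

variable {σ : Equiv.Perm (Fin (m+1))}

/-- full classification : a 321- and 3412-avoiding indecomposable permutation is `sigmaFun (bOf σ)`. -/
lemma perm_eq_sigmaFun (hA : Avoids321 σ) (hB : Avoids3412 σ) (hI : IndecomposableSigma σ)
    (i : Fin (m+1)) : σ i = sigmaFun (bOf σ) i := by
  by_cases hm : m = 0
  · subst hm
    apply Fin.ext
    have h1 := (σ i).isLt
    have h2 := (sigmaFun (bOf σ) i).isLt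
    omega
  have h0 : (0 : Fin (m+1)) ∈ bOf σ := bOf_zero_mem hA hI
  have hl : Fin.last m ∈ bOf σ := bOf_last_mem
  by_cases hEP : EP (bOf σ) i
  · exact sigma_on_E hA hB hI hEP.1 hEP.2
  · -- use uniqueness of monotone maps on the down-set
    set T := univ.filter (fun x : Fin (m+1) => EP (bOf σ) x) with hT
    set S := univ.filter (fun x : Fin (m+1) => ¬ EP (bOf σ) x) with hS
    have hiS : i ∈ S := mem_filter.2 ⟨mem_univ _, hEP⟩
    have hmonoσ : ∀ a ∈ S, ∀ b ∈ S, a < b → σ a < σ b := by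
      intro a ha b hb hab
      rw [hS, mem_filter] at ha hb
      rcases lt_trichotomy (σ a) (σ b) with h' | h' | h'
      · exact h'
      · exact absurd (σ.injective h') (ne_of_lt hab)
      · exfalso
        refine monoF hA hab ?_ h'
        exact le_of_not_EP_bOf ha.2
    have hmonos : ∀ a ∈ S, ∀ b ∈ S, a < b → sigmaFun (bOf σ) a < sigmaFun (bOf σ) b := by
      intro a ha b hb hab
      rw [hS, mem_filter] at ha hb
      exact sig_mono_F h0 hab ha.2 hb.2
    have hSuniv : S = univ \ T := by rw [hS, hT, filter_not]
    have himgσuniv : univ.image ⇑σ = univ := image_univ_of_surjective σ.surjective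
    have himgsuniv : univ.image (sigmaFun (bOf σ)) = univ := by
      apply eq_univ_of_card
      rw [card_image_of_injective _ (sig_injective h0 hl)]
      exact card_univ
    have himgT : T.image ⇑σ = T.image (sigmaFun (bOf σ)) := by
      apply image_congr
      intro x hxT
      rw [hT] at hxT
      simp only [coe_filter, Set.mem_setOf_eq] at hxT
      exact sigma_on_E hA hB hI hxT.2.1 hxT.2.2
    have himg : S.image ⇑σ = S.image (sigmaFun (bOf σ)) := by
      rw [hSuniv, image_sdiff _ _ σ.injective, image_sdiff _ _ (sig_injective h0 hl),
        himgσuniv, himgsuniv, himgT]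
    exact strictMonoOn_image_unique S.card S _ _ rfl hmonoσ hmonos himg i hiS

lemma perm_classified (hA : Avoids321 σ) (hB : Avoids3412 σ) (hI : IndecomposableSigma σ) :
    σ = sigmaPerm (bOf σ) (bOf_zero_mem hA hI) bOf_last_mem :=
  Equiv.ext (perm_eq_sigmaFun hA hB hI)

end NCN

open Finset

namespace NCN
variable {m : ℕ}

/-- the partition-side equivalence -/
noncomputable def equivPart (m : ℕ) :
    {B : Finset (Fin (m+1)) // (0 : Fin (m+1)) ∈ B ∧ Fin.last m ∈ B} ≃
      {P : Finpartition (Finset.univ : Finset (Fin (m+1))) //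
        Noncrossing P ∧ Nonnesting P ∧ IndecomposableP P} where
  toFun B := ⟨partOf B.1, noncrossing_partOf B.1, nonnesting_partOf B.1,
    indecomposableP_partOf B.2.1 B.2.2⟩
  invFun P := ⟨P.1.part 0, zero_mem_part_zero,
    last_mem_part_zero P.2.1 P.2.2.1 P.2.2.2⟩
  left_inv B := Subtype.ext (partOf_part_zero B.2.1)
  right_inv P := Subtype.ext (partition_eq_partOf P.2.1 P.2.2.1 P.2.2.2).symm

/-- the permutation-side map -/
noncomputable def permMap (m : ℕ)
    (B : {B : Finset (Fin (m+1)) // (0 : Fin (m+1)) ∈ B ∧ Fin.last m ∈ B}) :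
    {σ : Equiv.Perm (Fin (m+1)) //
      Avoids321 σ ∧ Avoids3412 σ ∧ IndecomposableSigma σ} :=
  ⟨sigmaPerm B.1 B.2.1 B.2.2, avoids321_sigmaPerm B.2.1 B.2.2,
    avoids3412_sigmaPerm B.2.1 B.2.2, indecomposable_sigmaPerm B.2.1 B.2.2⟩

lemma permMap_bijective (m : ℕ) : Function.Bijective (permMap m) := by
  constructor
  · intro B1 B2 heq
    have heq' : sigmaPerm B1.1 B1.2.1 B1.2.2 = sigmaPerm B2.1 B2.2.1 B2.2.2 :=
      congrArg Subtype.val heq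
    apply Subtype.ext
    rw [← sigmaPerm_recover B1.2.1 B1.2.2, ← sigmaPerm_recover B2.2.1 B2.2.2, heq']
  · intro σ
    refine ⟨⟨bOf σ.1, bOf_zero_mem σ.2.1 σ.2.2.2, bOf_last_mem⟩, ?_⟩
    exact Subtype.ext (perm_classified σ.2.1 σ.2.2.1 σ.2.2.2).symm

end NCN

theorem stmt_14 (n : ℕ) (hn : 1 ≤ n) :
    ∃ f : {P : Finpartition (Finset.univ : Finset (Fin n)) //
            Noncrossing P ∧ Nonnesting P ∧ IndecomposableP P} →
          {σ : Equiv.Perm (Fin n) //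
            Avoids321 σ ∧ Avoids3412 σ ∧ IndecomposableSigma σ},
      Function.Bijective f ∧
        Nat.card {P : Finpartition (Finset.univ : Finset (Fin n)) //
            Noncrossing P ∧ Nonnesting P ∧ IndecomposableP P} =
          Nat.card {σ : Equiv.Perm (Fin n) //
            Avoids321 σ ∧ Avoids3412 σ ∧ IndecomposableSigma σ} := by
  obtain ⟨m, rfl⟩ : ∃ m, n = m + 1 := ⟨n - 1, by omega⟩
  refine ⟨fun P => NCN.permMap m ((NCN.equivPart m).symm P), ?_, ?_⟩
  · exact (NCN.permMap_bijective m).comp (NCN.equivPart m).symm.bijective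
  · exact Nat.card_eq_of_bijective _ ((NCN.permMap_bijective m).comp (NCN.equivPart m).symm.bijective)
end

section
/- Every indecomposable noncrossing nonnesting partition of {1,...,n} (n ≥ 2) consists of exactly one block of size j ≥ 2 containing both 1 and n, together with n - j singleton blocks; consequently there are exactly 2^{n-2} such partitions. -/
namespace NCNNaux

open Finset

variable {n : ℕ} {P : Finpartition (Finset.univ : Finset (Fin n))}

lemma sameBlock_iff_mem_part {i j : Fin n} :
    SameBlock P i j ↔ j ∈ P.part i := by
  constructor
  · rintro ⟨b, hb, hib, hjb⟩
    rwa [P.part_eq_of_mem hb hib]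
  · intro h
    exact ⟨P.part i, P.part_mem.2 (mem_univ i), P.mem_part (mem_univ i), h⟩

lemma exists_arc_of_two {b : Finset (Fin n)} (hb : b ∈ P.parts) {x y : Fin n}
    (hx : x ∈ b) (hy : y ∈ b) (hxy : x < y) :
    ∃ j, IsArc P x j ∧ j ∈ b := by
  have hne : (b.filter (fun m => x < m)).Nonempty := ⟨y, mem_filter.2 ⟨hy, hxy⟩⟩
  set j := (b.filter (fun m => x < m)).min' hne with hj
  have hjmem := (b.filter (fun m => x < m)).min'_mem hne
  rw [mem_filter] at hjmem
  refine ⟨j, ⟨hjmem.2, ⟨b, hb, hx, hjmem.1⟩, ?_⟩, hjmem.1⟩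
  intro m hxm hmj hsb
  have hmb : m ∈ b := by
    have := sameBlock_iff_mem_part.1 hsb
    rwa [P.part_eq_of_mem hb hx] at this
  have : j ≤ m := min'_le _ _ (mem_filter.2 ⟨hmb, hxm⟩)
  exact absurd hmj (not_lt.2 this)

lemma exists_arc_cover (hind : IndecomposableP P) {k : ℕ} (hk1 : 0 < k) (hk : k < n) :
    ∃ i j : Fin n, IsArc P i j ∧ (i : ℕ) < k ∧ k ≤ (j : ℕ) := by
  by_contra hno
  push_neg at hno
  apply hind
  refine ⟨k, hk1, hk, fun b hb => ?_⟩
  by_contra hsplit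
  push_neg at hsplit
  obtain ⟨⟨x, hxb, hxk⟩, ⟨y, hyb, hyk⟩⟩ := hsplit
  have hLne : (b.filter (fun m : Fin n => (m : ℕ) < k)).Nonempty := ⟨y, mem_filter.2 ⟨hyb, hyk⟩⟩
  have hRne : (b.filter (fun m : Fin n => k ≤ (m : ℕ))).Nonempty := ⟨x, mem_filter.2 ⟨hxb, hxk⟩⟩
  set i := (b.filter (fun m : Fin n => (m : ℕ) < k)).max' hLne with hi
  set j := (b.filter (fun m : Fin n => k ≤ (m : ℕ))).min' hRne with hjdef
  have himem := (b.filter (fun m : Fin n => (m : ℕ) < k)).max'_mem hLne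
  have hjmem := (b.filter (fun m : Fin n => k ≤ (m : ℕ))).min'_mem hRne
  rw [mem_filter] at himem hjmem
  have hij : i < j := by
    rw [Fin.lt_def]; omega
  have harc : IsArc P i j := by
    refine ⟨hij, ⟨b, hb, himem.1, hjmem.1⟩, ?_⟩
    intro m him hmj hsb
    have hmb : m ∈ b := by
      have := sameBlock_iff_mem_part.1 hsb
      rwa [P.part_eq_of_mem hb himem.1] at this
    rcases lt_or_ge (m : ℕ) k with h | h
    · have : m ≤ i := le_max' _ _ (mem_filter.2 ⟨hmb, h⟩)
      exact absurd him (not_lt.2 this)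
    · have : j ≤ m := min'_le _ _ (mem_filter.2 ⟨hmb, h⟩)
      exact absurd hmj (not_lt.2 this)
  have := hno i j harc himem.2
  omega

lemma arc_le (hnc : Noncrossing P) (hnn : Nonnesting P)
    {i1 j1 i2 j2 : Fin n} (h1 : IsArc P i1 j1) (h2 : IsArc P i2 j2) (h12 : i1 < i2) :
    j1 ≤ i2 := by
  by_contra h
  push_neg at h
  rcases lt_trichotomy j1 j2 with hlt | heq | hgt
  · exact hnc ⟨i1, j1, i2, j2, h1, h2, h12, h, hlt⟩
  · obtain ⟨b, hb, hi1, hj1⟩ := h1.2.1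
    obtain ⟨b', hb', hi2, hj2⟩ := h2.2.1
    rw [heq] at hj1
    have hbb : b = b' := P.eq_of_mem_parts hb hb' hj1 hj2
    exact h1.2.2 i2 h12 h ⟨b, hb, hi1, hbb ▸ hi2⟩
  · exact hnn ⟨i1, j1, i2, j2, h1, h2, h12, h2.1, hgt⟩

lemma arc_cover_unique (hnc : Noncrossing P) (hnn : Nonnesting P)
    {i1 j1 i2 j2 : Fin n} {k : ℕ}
    (h1 : IsArc P i1 j1) (h2 : IsArc P i2 j2)
    (c1l : (i1 : ℕ) < k) (c1r : k ≤ (j1 : ℕ)) (c2l : (i2 : ℕ) < k) (c2r : k ≤ (j2 : ℕ)) :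
    i1 = i2 ∧ j1 = j2 := by
  have hi : i1 = i2 := by
    rcases lt_trichotomy i1 i2 with h | h | h
    · have := arc_le hnc hnn h1 h2 h
      rw [Fin.le_def] at this; omega
    · exact h
    · have := arc_le hnc hnn h2 h1 h
      rw [Fin.le_def] at this; omega
  subst hi
  refine ⟨rfl, ?_⟩
  rcases lt_trichotomy j1 j2 with h | h | h
  · exact absurd h1.2.1 (h2.2.2 j1 h1.1 h)
  · exact h
  · exact absurd h2.2.1 (h1.2.2 j2 h2.1 h)

lemma arc_mem_part_zero (hn : 2 ≤ n) (hnc : Noncrossing P) (hnn : Nonnesting P)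
    (hind : IndecomposableP P) :
    ∀ k : ℕ, k < n → ∀ i j : Fin n, IsArc P i j → (i : ℕ) < k → k ≤ (j : ℕ) →
      i ∈ P.part ⟨0, lt_of_lt_of_le two_pos hn⟩ ∧ j ∈ P.part ⟨0, lt_of_lt_of_le two_pos hn⟩ := by
  have hn0 : 0 < n := by omega
  set z : Fin n := ⟨0, hn0⟩ with hz
  intro k
  induction k with
  | zero => intro _ i j _ hik _; exact absurd hik (Nat.not_lt_zero _)
  | succ k ih =>
    intro hkn i j harc hik hkj
    rcases Nat.eq_zero_or_pos k with hk | hk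
    · subst hk
      have hiz : i = z := Fin.ext (by show (i : ℕ) = 0; omega)
      constructor
      · rw [hiz]; exact P.mem_part (mem_univ z)
      · have := sameBlock_iff_mem_part.1 harc.2.1
        rwa [hiz] at this
    · by_cases hik' : (i : ℕ) < k
      · exact ih (by omega) i j harc hik' (by omega)
      · have hieq : (i : ℕ) = k := by omega
        obtain ⟨i', j', harc', hi'k, hkj'⟩ := exists_arc_cover hind hk (by omega)
        by_cases hj' : k + 1 ≤ (j' : ℕ)
        · have h := arc_cover_unique hnc hnn harc' harc (by omega) hj' hik hkj
          have : (i' : ℕ) = (i : ℕ) := congrArg Fin.val h.1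
          omega
        · have hji : j' = i := Fin.ext (by omega)
          have hmem := ih (by omega) i' j' harc' hi'k hkj'
          have hiB : i ∈ P.part z := hji ▸ hmem.2
          refine ⟨hiB, ?_⟩
          have hj : j ∈ P.part i := sameBlock_iff_mem_part.1 harc.2.1
          rwa [P.part_eq_of_mem (P.part_mem.2 (mem_univ z)) hiB] at hj

lemma structure_thm (hn : 2 ≤ n) (hnc : Noncrossing P) (hnn : Nonnesting P)
    (hind : IndecomposableP P) :
    ∃ b ∈ P.parts, 2 ≤ b.card ∧ (⟨0, lt_of_lt_of_le two_pos hn⟩ : Fin n) ∈ b ∧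
      (⟨n - 1, Nat.sub_lt (lt_of_lt_of_le two_pos hn) one_pos⟩ : Fin n) ∈ b ∧
      ∀ b' ∈ P.parts, b' ≠ b → b'.card = 1 := by
  have hn0 : 0 < n := by omega
  set z : Fin n := ⟨0, by omega⟩ with hzdef
  set l : Fin n := ⟨n - 1, by omega⟩ with hldef
  set b := P.part z with hbdef
  have hb : b ∈ P.parts := P.part_mem.2 (mem_univ z)
  have hzb : z ∈ b := P.mem_part (mem_univ z)
  have hlb : l ∈ b := by
    obtain ⟨i, j, harc, hil, hjl⟩ := exists_arc_cover hind (k := n - 1) (by omega) (by omega)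
    have hj : j = l := Fin.ext (by show (j : ℕ) = n - 1; have := j.isLt; omega)
    have := (arc_mem_part_zero hn hnc hnn hind (n - 1) (by omega) i j harc hil hjl).2
    rwa [hj] at this
  have hcard : 2 ≤ b.card := by
    rw [show (2 : ℕ) = 1 + 1 from rfl]
    refine Finset.one_lt_card.2 ⟨z, hzb, l, hlb, ?_⟩
    intro h
    have : (0 : ℕ) = n - 1 := congrArg Fin.val h
    omega
  refine ⟨b, hb, hcard, hzb, hlb, ?_⟩
  intro b' hb' hne
  by_contra hcard'
  have hbne : b'.Nonempty := P.nonempty_of_mem_parts hb'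
  have h2 : 1 < b'.card := by
    rcases Nat.lt_or_ge b'.card 2 with h | h
    · have hpos : 0 < b'.card := card_pos.2 hbne
      omega
    · omega
  obtain ⟨x, hx, y, hy, hxy⟩ := Finset.one_lt_card.1 h2
  -- get the smaller of the two as x'
  have key : ∀ u v : Fin n, u ∈ b' → v ∈ b' → u < v → False := by
    intro u v hu hv huv
    obtain ⟨j0, harc, _⟩ := exists_arc_of_two hb' hu hv huv
    have hj0 : (u : ℕ) + 1 ≤ (j0 : ℕ) := harc.1
    have hcov := arc_mem_part_zero hn hnc hnn hind ((u : ℕ) + 1)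
      (by have := j0.isLt; omega) u j0 harc (by omega) hj0
    have : b' = b := P.eq_of_mem_parts hb' hb hu hcov.1
    exact hne this
  rcases lt_or_gt_of_ne hxy with h | h
  · exact key x y hx hy h
  · exact key y x hy hx h

/-! ### Construction -/

variable (B : Finset (Fin n))

def sB : Setoid (Fin n) :=
  ⟨fun a b => a = b ∨ (a ∈ B ∧ b ∈ B),
    ⟨fun _ => Or.inl rfl,
     fun h => h.elim (fun e => Or.inl e.symm) (fun p => Or.inr ⟨p.2, p.1⟩),
     fun hab hbc => by
       rcases hab with rfl | hab
       · exact hbc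
       · rcases hbc with rfl | hbc
         · exact Or.inr hab
         · exact Or.inr ⟨hab.1, hbc.2⟩⟩⟩

instance : DecidableRel (sB B).r := fun a b =>
  show Decidable (a = b ∨ (a ∈ B ∧ b ∈ B)) from inferInstance

def PB : Finpartition (univ : Finset (Fin n)) := Finpartition.ofSetoid (sB B)

lemma mem_part_PB {a b : Fin n} : b ∈ (PB B).part a ↔ (a = b ∨ (a ∈ B ∧ b ∈ B)) :=
  Finpartition.mem_part_ofSetoid_iff_rel

lemma sameBlock_PB {a b : Fin n} : SameBlock (PB B) a b ↔ (a = b ∨ (a ∈ B ∧ b ∈ B)) := by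
  rw [sameBlock_iff_mem_part, mem_part_PB]

lemma arc_PB_mem {i j : Fin n} (h : IsArc (PB B) i j) : i ∈ B ∧ j ∈ B := by
  rcases (sameBlock_PB B).1 h.2.1 with h' | h'
  · exact absurd h' (ne_of_lt h.1)
  · exact h'

lemma PB_nc : Noncrossing (PB B) := by
  rintro ⟨i1, j1, i2, j2, h1, h2, ha, hb, _⟩
  obtain ⟨hi1, _⟩ := arc_PB_mem B h1
  obtain ⟨hi2, _⟩ := arc_PB_mem B h2
  exact h1.2.2 i2 ha hb ((sameBlock_PB B).2 (Or.inr ⟨hi1, hi2⟩))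

lemma PB_nn : Nonnesting (PB B) := by
  rintro ⟨i1, j1, i2, j2, h1, h2, ha, hb, hc⟩
  obtain ⟨hi1, _⟩ := arc_PB_mem B h1
  obtain ⟨hi2, _⟩ := arc_PB_mem B h2
  exact h1.2.2 i2 ha (hb.trans hc) ((sameBlock_PB B).2 (Or.inr ⟨hi1, hi2⟩))

lemma PB_ind (hn : 2 ≤ n) (hz : (⟨0, lt_of_lt_of_le two_pos hn⟩ : Fin n) ∈ B)
    (hl : (⟨n - 1, Nat.sub_lt (lt_of_lt_of_le two_pos hn) one_pos⟩ : Fin n) ∈ B) : IndecomposableP (PB B) := by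
  rintro ⟨k, hk0, hkn, hsplit⟩
  set z : Fin n := ⟨0, by omega⟩
  set l : Fin n := ⟨n - 1, by omega⟩
  have hpart := (PB B).part_mem.2 (mem_univ z)
  rcases hsplit _ hpart with h | h
  · have h2 : n - 1 < k := h l ((mem_part_PB B).2 (Or.inr ⟨hz, hl⟩))
    omega
  · have h2 : k ≤ 0 := h z ((PB B).mem_part (mem_univ z))
    omega

lemma finpartition_eq_of_part_eq {Q : Finpartition (univ : Finset (Fin n))}
    (h : ∀ x, P.part x = Q.part x) : P = Q := by
  apply Finpartition.ext
  ext b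
  constructor
  · intro hb
    obtain ⟨x, hx⟩ := P.nonempty_of_mem_parts hb
    have hbx : P.part x = b := P.part_eq_of_mem hb hx
    rw [← hbx, h]
    exact Q.part_mem.2 (mem_univ x)
  · intro hb
    obtain ⟨x, hx⟩ := Q.nonempty_of_mem_parts hb
    have hbx : Q.part x = b := Q.part_eq_of_mem hb hx
    rw [← hbx, ← h]
    exact P.part_mem.2 (mem_univ x)

lemma PB_part_z (hn : 2 ≤ n) (hz : (⟨0, lt_of_lt_of_le two_pos hn⟩ : Fin n) ∈ B) :
    (PB B).part ⟨0, lt_of_lt_of_le two_pos hn⟩ = B := by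
  ext y
  rw [mem_part_PB]
  constructor
  · rintro (rfl | ⟨_, hy⟩)
    · exact hz
    · exact hy
  · intro hy
    exact Or.inr ⟨hz, hy⟩

lemma recover (hn : 2 ≤ n) (hnc : Noncrossing P) (hnn : Nonnesting P)
    (hind : IndecomposableP P) : PB (P.part ⟨0, lt_of_lt_of_le two_pos hn⟩) = P := by
  set z : Fin n := ⟨0, by omega⟩ with hzdef
  obtain ⟨b, hb, _, hzb, _, hsing⟩ := structure_thm hn hnc hnn hind
  have hBz : P.part z = b := P.part_eq_of_mem hb hzb
  apply finpartition_eq_of_part_eq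
  intro x
  ext y
  rw [mem_part_PB]
  constructor
  · rintro (rfl | ⟨hx, hy⟩)
    · exact P.mem_part (mem_univ x)
    · rw [P.part_eq_of_mem (P.part_mem.2 (mem_univ z)) hx]
      exact hy
  · intro hy
    by_cases hx : x ∈ P.part z
    · right
      refine ⟨hx, ?_⟩
      rwa [P.part_eq_of_mem (P.part_mem.2 (mem_univ z)) hx] at hy
    · left
      have hne : P.part x ≠ b := by
        intro e
        exact hx (by rw [hBz]; exact e ▸ P.mem_part (mem_univ x))
      have h1 : (P.part x).card = 1 := hsing _ (P.part_mem.2 (mem_univ x)) hne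
      obtain ⟨a, ha⟩ := card_eq_one.1 h1
      have hxa := P.mem_part (mem_univ x)
      rw [ha, mem_singleton] at hxa hy
      rw [hxa, hy]

end NCNNaux

open Finset NCNNaux in
/-- Every indecomposable noncrossing nonnesting partition of `[n]` (`n ≥ 2`)
has one block of size `≥ 2` containing both `1` and `n`, with all other blocks
singletons; consequently there are exactly `2 ^ (n - 2)` such partitions. -/
theorem stmt_15 (n : ℕ) (hn : 2 ≤ n) :
    (∀ P : Finpartition (Finset.univ : Finset (Fin n)),
      Noncrossing P → Nonnesting P → IndecomposableP P →
        ∃ b ∈ P.parts, 2 ≤ b.card ∧ (⟨0, by omega⟩ : Fin n) ∈ b ∧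
          (⟨n - 1, by omega⟩ : Fin n) ∈ b ∧
          ∀ b' ∈ P.parts, b' ≠ b → b'.card = 1) ∧
    Nat.card {P : Finpartition (Finset.univ : Finset (Fin n)) //
        Noncrossing P ∧ Nonnesting P ∧ IndecomposableP P} = 2 ^ (n - 2) := by
  constructor
  · intro P hnc hnn hind
    exact structure_thm hn hnc hnn hind
  · set z : Fin n := ⟨0, by omega⟩ with hzdef
    set l : Fin n := ⟨n - 1, by omega⟩ with hldef
    have hzl : z ≠ l := by
      intro h
      have : (0 : ℕ) = n - 1 := congrArg Fin.val h
      omega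
    have e1 : {P : Finpartition (Finset.univ : Finset (Fin n)) //
        Noncrossing P ∧ Nonnesting P ∧ IndecomposableP P} ≃
        {B : Finset (Fin n) // z ∈ B ∧ l ∈ B} :=
      { toFun := fun Q => ⟨Q.1.part z, Q.1.mem_part (mem_univ z), by
          obtain ⟨b, hb, _, hzb, hlb, _⟩ := structure_thm hn Q.2.1 Q.2.2.1 Q.2.2.2
          rw [Q.1.part_eq_of_mem hb hzb]
          exact hlb⟩
        invFun := fun B => ⟨PB B.1, PB_nc B.1, PB_nn B.1, PB_ind B.1 hn B.2.1 B.2.2⟩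
        left_inv := fun Q => Subtype.ext (recover hn Q.2.1 Q.2.2.1 Q.2.2.2)
        right_inv := fun B => Subtype.ext (PB_part_z B.1 hn B.2.1) }
    have e2 : {B : Finset (Fin n) // z ∈ B ∧ l ∈ B} ≃
        ↥((Finset.univ \ {z, l} : Finset (Fin n)).powerset) :=
      { toFun := fun B => ⟨B.1 \ {z, l}, by
          rw [mem_powerset]
          exact sdiff_subset_sdiff (subset_univ _) (Finset.Subset.refl _)⟩
        invFun := fun S => ⟨S.1 ∪ {z, l}, by simp, by simp⟩
        left_inv := fun B => Subtype.ext (by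
          have hsub : ({z, l} : Finset (Fin n)) ⊆ B.1 :=
            insert_subset B.2.1 (singleton_subset_iff.2 B.2.2)
          exact sdiff_union_of_subset hsub)
        right_inv := fun S => Subtype.ext (by
          have hS := mem_powerset.1 S.2
          ext y
          simp only [mem_sdiff, mem_union]
          constructor
          · rintro ⟨hy | hy, hy2⟩
            · exact hy
            · exact absurd hy hy2
          · intro hy
            exact ⟨Or.inl hy, (mem_sdiff.1 (hS hy)).2⟩) }
    rw [Nat.card_congr (e1.trans e2), Nat.card_eq_fintype_card, Fintype.card_coe,
      card_powerset]
    congr 1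
    rw [card_sdiff_of_subset (subset_univ _), card_univ, Fintype.card_fin,
      card_insert_of_notMem (by simp [hzl]), card_singleton]
end

section
/- For 1 ≤ k < n, the number of permutations σ of {1,...,n} avoiding 231 and 3124 with σ(k) = 1 equals k times the number of permutations of {1,...,n-k} avoiding 231 and 3124. -/
/-- `σ` avoids the pattern 231: no indices `i < j < k` with `σ k < σ i < σ j`. -/
def Avoids231 {n : ℕ} (σ : Equiv.Perm (Fin n)) : Prop :=
  ¬ ∃ i j k : Fin n, i < j ∧ j < k ∧ σ k < σ i ∧ σ i < σ j

/-- `σ` avoids the pattern 3124: no indices `i < j < k < l` with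
`σ j < σ k < σ i < σ l`. -/
def Avoids3124 {n : ℕ} (σ : Equiv.Perm (Fin n)) : Prop :=
  ¬ ∃ i j k l : Fin n, i < j ∧ j < k ∧ k < l ∧ σ j < σ k ∧ σ k < σ i ∧ σ i < σ l

namespace Stmt18

def fwd (n k j : ℕ) (τ : Equiv.Perm (Fin (n-k))) (i : ℕ) : ℕ :=
  if i < k-1-j then n-1-i
  else if i < k then k-1-i
  else if h : i - k < n - k then j+1+(τ ⟨i-k, h⟩).val else i

def bwd (n k j : ℕ) (τ : Equiv.Perm (Fin (n-k))) (v : ℕ) : ℕ :=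
  if v ≤ j then k-1-v
  else if n-k+j < v then n-1-v
  else if h : v - (j+1) < n - k then k + (τ.symm ⟨v-(j+1), h⟩).val else v

def permOf (n k : ℕ) (hk : 1 ≤ k) (hkn : k < n) (j : ℕ) (hj : j < k)
    (τ : Equiv.Perm (Fin (n-k))) : Equiv.Perm (Fin n) where
  toFun i := ⟨fwd n k j τ i.val, by
    have := i.isLt
    unfold fwd
    split_ifs with h1 h2 h3
    · omega
    · omega
    · have := (τ ⟨i.val - k, h3⟩).isLt; omega
    · omega⟩
  invFun v := ⟨bwd n k j τ v.val, by
    have := v.isLt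
    unfold bwd
    split_ifs with h1 h2 h3
    · omega
    · omega
    · have := (τ.symm ⟨v.val-(j+1), h3⟩).isLt; omega
    · omega⟩
  left_inv i := by
    ext
    have hi := i.isLt
    show bwd n k j τ (fwd n k j τ i.val) = i.val
    unfold fwd
    split_ifs with h1 h2 h3
    · unfold bwd
      split_ifs with g1 g2 <;> omega
    · unfold bwd
      split_ifs with g1 <;> omega
    · --
      have hlt := (τ ⟨i.val - k, h3⟩).isLt
      unfold bwd
      have g1 : ¬ (j+1+(τ ⟨i.val - k, h3⟩).val ≤ j) := by omega
      have g2 : ¬ (n-k+j < j+1+(τ ⟨i.val - k, h3⟩).val) := by omega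
      rw [if_neg g1, if_neg g2, dif_pos (by omega : j+1+(τ ⟨i.val - k, h3⟩).val - (j+1) < n - k)]
      have : (⟨j+1+(τ ⟨i.val - k, h3⟩).val - (j+1), by omega⟩ : Fin (n-k)) = τ ⟨i.val - k, h3⟩ := by
        ext; simp
      rw [this, Equiv.symm_apply_apply]; simp; omega
    · omega
  right_inv v := by
    ext
    have hv := v.isLt
    show fwd n k j τ (bwd n k j τ v.val) = v.val
    unfold bwd
    split_ifs with h1 h2 h3
    · unfold fwd; split_ifs with g1 g2 <;> omega
    · unfold fwd; split_ifs with g1 g2 <;> omega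
    · --
      have hlt := (τ.symm ⟨v.val - (j+1), h3⟩).isLt
      unfold fwd
      have g1 : ¬ (k + (τ.symm ⟨v.val - (j+1), h3⟩).val < k-1-j) := by omega
      have g2 : ¬ (k + (τ.symm ⟨v.val - (j+1), h3⟩).val < k) := by omega
      rw [if_neg g1, if_neg g2, dif_pos (by omega : k + (τ.symm ⟨v.val - (j+1), h3⟩).val - k < n - k)]
      have : (⟨k + (τ.symm ⟨v.val - (j+1), h3⟩).val - k, by omega⟩ : Fin (n-k)) = τ.symm ⟨v.val - (j+1), h3⟩ := by
        ext; simp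
      rw [this, Equiv.apply_symm_apply]; simp; omega
    · omega

end Stmt18

namespace Stmt18

variable {n k j : ℕ} (hk : 1 ≤ k) (hkn : k < n) (hj : j < k) (τ : Equiv.Perm (Fin (n-k)))

lemma permOf_prefix_anti (i i' : Fin n) (hii : i.val < i'.val) (hi' : i'.val < k) :
    ((permOf n k hk hkn j hj τ) i').val < ((permOf n k hk hkn j hj τ) i).val := by
  show fwd n k j τ i'.val < fwd n k j τ i.val
  unfold fwd
  split_ifs <;> omega

lemma permOf_prefix_out (i : Fin n) (hik : i.val < k) :
    ((permOf n k hk hkn j hj τ) i).val ≤ j ∨ n-k+j < ((permOf n k hk hkn j hj τ) i).val := by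
  show fwd n k j τ i.val ≤ j ∨ n-k+j < fwd n k j τ i.val
  unfold fwd
  split_ifs <;> omega

lemma permOf_suffix (i : Fin n) (hik : k ≤ i.val) :
    ((permOf n k hk hkn j hj τ) i).val = j+1+(τ ⟨i.val-k, by omega⟩).val := by
  show fwd n k j τ i.val = _
  unfold fwd
  have h3 : i.val - k < n - k := by omega
  rw [if_neg (by omega), if_neg (by omega), dif_pos h3]

lemma permOf_suffix_mem (i : Fin n) (hik : k ≤ i.val) :
    j+1 ≤ ((permOf n k hk hkn j hj τ) i).val ∧ ((permOf n k hk hkn j hj τ) i).val ≤ n-k+j := by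
  rw [permOf_suffix hk hkn hj τ i hik]
  have := (τ ⟨i.val-k, by omega⟩).isLt
  omega

lemma permOf_avoids231 (hτ : Avoids231 τ) : Avoids231 (permOf n k hk hkn j hj τ) := by
  rintro ⟨a, b, c, hab, hbc, h1, h2⟩
  by_cases hbk : b.val < k
  · exact absurd (permOf_prefix_anti hk hkn hj τ a b hab hbk) (by simp only [Fin.lt_iff_val_lt_val] at h2 ⊢; omega)
  · push_neg at hbk
    have hck : k ≤ c.val := by have := Fin.lt_iff_val_lt_val.mp hbc; omega
    have mb := permOf_suffix_mem hk hkn hj τ b hbk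
    have mc := permOf_suffix_mem hk hkn hj τ c hck
    simp only [Fin.lt_iff_val_lt_val] at h1 h2 hab hbc
    by_cases hak : a.val < k
    · rcases permOf_prefix_out hk hkn hj τ a hak with h | h <;> omega
    · push_neg at hak
      apply hτ
      refine ⟨⟨a.val-k, by omega⟩, ⟨b.val-k, by omega⟩, ⟨c.val-k, by omega⟩, ?_, ?_, ?_, ?_⟩ <;>
        simp only [Fin.lt_iff_val_lt_val]
      · omega
      · omega
      · have ea := permOf_suffix hk hkn hj τ a hak
        have ec := permOf_suffix hk hkn hj τ c hck
        omega
      · have ea := permOf_suffix hk hkn hj τ a hak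
        have eb := permOf_suffix hk hkn hj τ b hbk
        omega

lemma permOf_avoids3124 (hτ : Avoids3124 τ) : Avoids3124 (permOf n k hk hkn j hj τ) := by
  rintro ⟨a, b, c, d, hab, hbc, hcd, h1, h2, h3⟩
  simp only [Fin.lt_iff_val_lt_val] at h1 h2 h3 hab hbc hcd
  by_cases hck : c.val < k
  · -- b < c < k with σ b < σ c contradicts prefix decreasing
    have := permOf_prefix_anti hk hkn hj τ b c hbc hck
    omega
  · push_neg at hck
    have hdk : k ≤ d.val := by omega
    have mc := permOf_suffix_mem hk hkn hj τ c hck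
    have md := permOf_suffix_mem hk hkn hj τ d hdk
    by_cases hak : a.val < k
    · rcases permOf_prefix_out hk hkn hj τ a hak with h | h <;> omega
    · push_neg at hak
      have hbk : k ≤ b.val := by omega
      apply hτ
      refine ⟨⟨a.val-k, by omega⟩, ⟨b.val-k, by omega⟩, ⟨c.val-k, by omega⟩, ⟨d.val-k, by omega⟩,
        ?_, ?_, ?_, ?_, ?_, ?_⟩ <;> simp only [Fin.lt_iff_val_lt_val]
      · omega
      · omega
      · omega
      all_goals {
        have ea := permOf_suffix hk hkn hj τ a hak
        have eb := permOf_suffix hk hkn hj τ b hbk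
        have ec := permOf_suffix hk hkn hj τ c hck
        have ed := permOf_suffix hk hkn hj τ d hdk
        omega }

lemma permOf_at_kminus1 :
    (permOf n k hk hkn j hj τ) ⟨k-1, Nat.lt_of_le_of_lt (Nat.sub_le k 1) hkn⟩ = ⟨0, Nat.lt_of_le_of_lt (Nat.zero_le k) hkn⟩ := by
  ext
  show fwd n k j τ (k-1) = 0
  unfold fwd
  split_ifs <;> omega

end Stmt18

namespace Stmt18

def sufPos (n k : ℕ) (hkn : k < n) (t : Fin (n-k)) : Fin n :=
  ⟨k + t.val, by have := t.isLt; omega⟩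

variable {n k : ℕ} (hk : 1 ≤ k) (hkn : k < n)

lemma permOf_inj {j j' : ℕ} (hj : j < k) (hj' : j' < k)
    {τ τ' : Equiv.Perm (Fin (n-k))}
    (h : permOf n k hk hkn j hj τ = permOf n k hk hkn j' hj' τ') : j = j' ∧ τ = τ' := by
  have hnk : 0 < n - k := by omega
  have key : ∀ t : Fin (n-k), j + 1 + (τ t).val = j' + 1 + (τ' t).val := by
    intro t
    have e1 := permOf_suffix hk hkn hj τ (sufPos n k hkn t) (by simp [sufPos])
    have e2 := permOf_suffix hk hkn hj' τ' (sufPos n k hkn t) (by simp [sufPos])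
    rw [h] at e1
    have ht : (⟨(sufPos n k hkn t).val - k, by have := t.isLt; simp [sufPos]⟩ : Fin (n-k)) = t := by
      ext; simp [sufPos]
    rw [ht] at e1 e2
    omega
  have hjj : j = j' := by
    have k1 := key (τ.symm ⟨0, hnk⟩)
    have k2 := key (τ'.symm ⟨0, hnk⟩)
    rw [Equiv.apply_symm_apply] at k1
    rw [Equiv.apply_symm_apply] at k2
    have z : ((⟨0, hnk⟩ : Fin (n-k))).val = 0 := rfl
    have b1 := (τ' (τ.symm ⟨0, hnk⟩)).isLt
    have b2 := (τ (τ'.symm ⟨0, hnk⟩)).isLt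
    omega
  refine ⟨hjj, ?_⟩
  ext t
  have := key t
  omega

set_option maxHeartbeats 2000000 in
lemma structure_lemma (σ : Equiv.Perm (Fin n)) (h231 : Avoids231 σ) (h3124 : Avoids3124 σ)
    (h0 : σ ⟨k-1, Nat.lt_of_le_of_lt (Nat.sub_le k 1) hkn⟩ = ⟨0, Nat.lt_of_le_of_lt (Nat.zero_le k) hkn⟩) :
    ∃ j, ∃ hj : j < k, ∃ τ : Equiv.Perm (Fin (n-k)), Avoids231 τ ∧ Avoids3124 τ ∧
      σ = permOf n k hk hkn j hj τ := by
  have hnk : 0 < n - k := by omega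
  set P := sufPos n k hkn with hP
  -- suffix value set
  set S : Finset ℕ := Finset.image (fun t => (σ (P t)).val) Finset.univ with hS
  have hSne : S.Nonempty := by
    refine ⟨(σ (P ⟨0, hnk⟩)).val, ?_⟩
    simp [hS]
  set m := S.min' hSne with hm
  have hmS : m ∈ S := S.min'_mem hSne
  clear_value m
  obtain ⟨t0, -, ht0⟩ := Finset.mem_image.mp hmS
  -- suffix values are ≥ 1
  have hm1 : 1 ≤ m := by
    rcases Nat.eq_zero_or_pos m with h | h
    · exfalso
      have : σ (P t0) = σ ⟨k-1, by omega⟩ := by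
        rw [h0]; exact Fin.ext (show (σ (P t0)).val = 0 by omega)
      have := σ.injective this
      have : (P t0).val = k - 1 := by rw [this]
      simp [hP, sufPos] at this
      omega
    · exact h
  set j := m - 1 with hjdef
  clear_value j
  have hmj : m = j + 1 := by omega
  -- every suffix value is ≥ m and < n
  have hsufge : ∀ t, m ≤ (σ (P t)).val := by
    intro t; rw [hm]; exact S.min'_le _ (by simp [hS])
  -- prefix values are not suffix values
  have hprenotS : ∀ a : Fin n, a.val < k → (σ a).val ∉ S := by
    intro a ha hmem
    rw [hS] at hmem
    obtain ⟨t, -, ht⟩ := Finset.mem_image.mp hmem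
    have : P t = a := σ.injective (Fin.ext ht)
    have : (P t).val = a.val := by rw [this]
    simp [hP, sufPos] at this
    omega
  -- prefix is strictly decreasing (positions ≤ k-1)
  have hanti : ∀ a b : Fin n, a.val < b.val → b.val ≤ k-1 → (σ b).val < (σ a).val := by
    intro a b hab hbk
    have hane : σ a ≠ σ ⟨k-1, by omega⟩ := fun h => by
      have := σ.injective h
      have : a.val = k-1 := by rw [this]
      omega
    rw [h0] at hane
    have ha0 : 0 < (σ a).val := by
      rcases Nat.eq_zero_or_pos (σ a).val with h | h
      · exact absurd (Fin.ext h) hane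
      · exact h
    rcases Nat.lt_trichotomy (σ b).val (σ a).val with h | h | h
    · exact h
    · exact absurd (σ.injective (Fin.ext h.symm)) (by intro hh; rw [hh] at hab; omega)
    · exfalso
      have hbne : b.val < k - 1 := by
        rcases Nat.lt_or_ge b.val (k-1) with hh | hh
        · exact hh
        · exfalso
          have : b = (⟨k-1, by omega⟩ : Fin n) := Fin.ext (show b.val = k-1 by omega)
          rw [this, h0] at h
          simp at h
      exact h231 ⟨a, b, ⟨k-1, by omega⟩, Fin.lt_def.mpr hab,
        Fin.lt_def.mpr (show b.val < k-1 from hbne),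
        by rw [h0]; exact Fin.lt_def.mpr ha0, Fin.lt_def.mpr h⟩
  -- sandwich: no prefix value strictly between two suffix values
  have hsand : ∀ a : Fin n, a.val < k-1 → ∀ t t' : Fin (n-k),
      ¬((σ (P t)).val < (σ a).val ∧ (σ a).val < (σ (P t')).val) := by
    intro a ha t t' ⟨hlt, hgt⟩
    rcases Nat.lt_trichotomy t'.val t.val with h | h | h
    · exact h231 ⟨a, P t', P t,
        Fin.lt_def.mpr (by show a.val < k + t'.val; omega),
        Fin.lt_def.mpr (by show k + t'.val < k + t.val; omega),
        Fin.lt_def.mpr hlt, Fin.lt_def.mpr hgt⟩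
    · exfalso
      have : t = t' := Fin.ext h.symm
      rw [this] at hlt; omega
    · exact h3124 ⟨a, ⟨k-1, by omega⟩, P t, P t',
        Fin.lt_def.mpr (show a.val < k-1 from ha),
        Fin.lt_def.mpr (by show k-1 < k + t.val; omega),
        Fin.lt_def.mpr (by show k + t.val < k + t'.val; omega),
        by rw [h0]; exact Fin.lt_def.mpr (by show 0 < (σ (P t)).val; have := hsufge t; omega),
        Fin.lt_def.mpr hlt, Fin.lt_def.mpr hgt⟩
  -- suffix values injective as a function to ℕ
  have hvalinj : Function.Injective (fun t => (σ (P t)).val) := by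
    intro x y hxy
    have : P x = P y := σ.injective (Fin.ext hxy)
    have : (P x).val = (P y).val := by rw [this]
    have hx : (P x).val = k + x.val := rfl
    have hy : (P y).val = k + y.val := rfl
    exact Fin.ext (by omega)
  have hcard : S.card = n - k := by
    rw [hS, Finset.card_image_of_injective _ hvalinj, Finset.card_univ, Fintype.card_fin]
  -- value at suffix differs from value at prefix positions
  have hne : ∀ (a : Fin n), a.val < k → ∀ t, (σ (P t)).val ≠ (σ a).val := by
    intro a ha t h
    have : P t = a := σ.injective (Fin.ext h)
    have : (P t).val = a.val := by rw [this]
    have hx : (P t).val = k + t.val := rfl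
    omega
  -- each prefix value is ≤ j or above all suffix values
  have hpout : ∀ a : Fin n, a.val < k-1 →
      ((σ a).val ≤ j ∨ ∀ t, (σ (P t)).val < (σ a).val) := by
    intro a ha
    rcases Nat.lt_or_ge (σ a).val m with h | h
    · left; omega
    · right
      intro t
      rcases Nat.lt_trichotomy (σ (P t)).val (σ a).val with hh | hh | hh
      · exact hh
      · exact absurd hh (hne a (by omega) t)
      · exfalso
        have hmlt : m < (σ a).val := by
          have := hne a (by omega) t0
          rw [ht0] at this
          omega
        exact hsand a ha t0 t ⟨by omega, hh⟩
  set M := S.max' hSne with hM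
  have hMS : M ∈ S := S.max'_mem hSne
  clear_value M
  have hMn : M < n := by
    obtain ⟨tM, -, htM⟩ := Finset.mem_image.mp hMS
    rw [← htM]; exact (σ (P tM)).isLt
  have hIccS : Finset.Icc m M ⊆ S := by
    intro v hv
    rw [Finset.mem_Icc] at hv
    have hvn : v < n := by omega
    set p := σ.symm ⟨v, hvn⟩ with hp
    have hσp : σ p = ⟨v, hvn⟩ := σ.apply_symm_apply _
    rcases Nat.lt_or_ge p.val k with hpk | hpk
    · -- prefix position: contradiction
      exfalso
      have hpk1 : p.val < k - 1 := by
        rcases Nat.lt_or_ge p.val (k-1) with hh | hh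
        · exact hh
        · exfalso
          have hpe : p = (⟨k-1, by omega⟩ : Fin n) := Fin.ext (show p.val = k-1 by omega)
          rw [hpe, h0] at hσp
          have : (0 : ℕ) = v := congrArg Fin.val hσp
          omega
      have hv' : (σ p).val = v := by rw [hσp]
      rcases hpout p hpk1 with h | h
      · omega
      · obtain ⟨tM, -, htM⟩ := Finset.mem_image.mp hMS
        have := h tM
        omega
    · -- suffix position
      have hplt := p.isLt
      have : P ⟨p.val - k, by omega⟩ = p := Fin.ext (by show k + (p.val - k) = p.val; omega)
      rw [hS]
      refine Finset.mem_image.mpr ⟨⟨p.val - k, by omega⟩, Finset.mem_univ _, ?_⟩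
      rw [this, hσp]
  have hSIcc : S ⊆ Finset.Icc m M := fun v hv =>
    Finset.mem_Icc.mpr ⟨by rw [hm]; exact S.min'_le v hv, by rw [hM]; exact S.le_max' v hv⟩
  have hSeq : S = Finset.Icc m M := Finset.Subset.antisymm hSIcc hIccS
  have hMeq : M = n - k + j := by
    have : (Finset.Icc m M).card = M + 1 - m := Nat.card_Icc m M
    rw [← hSeq, hcard] at this
    have : m ≤ M := by rw [hm]; exact S.min'_le M hMS
    omega
  -- j < k by counting small values
  have hjk : j < k := by
    by_contra hcon
    push_neg at hcon
    have hmap : ∀ v, v < j+1 → ∀ h : v < n, (σ.symm ⟨v, h⟩).val < k := by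
      intro v hv h
      by_contra hge
      push_neg at hge
      have hplt := (σ.symm ⟨v, h⟩).isLt
      have hPp : P ⟨(σ.symm ⟨v, h⟩).val - k, by omega⟩ = σ.symm ⟨v, h⟩ :=
        Fin.ext (by show k + ((σ.symm ⟨v, h⟩).val - k) = (σ.symm ⟨v, h⟩).val; omega)
      have hvS : v ∈ S := by
        rw [hS]
        refine Finset.mem_image.mpr ⟨⟨(σ.symm ⟨v, h⟩).val - k, by omega⟩, Finset.mem_univ _, ?_⟩
        rw [hPp, σ.apply_symm_apply]
      have hle := S.min'_le _ hvS
      rw [← hm] at hle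
      omega
    have hsub : (Finset.range (j+1)).image (fun v => if h : v < n then (σ.symm ⟨v, h⟩).val else 0)
        ⊆ Finset.range k := by
      intro x hx
      rw [Finset.mem_image] at hx
      obtain ⟨v, hv, rfl⟩ := hx
      rw [Finset.mem_range] at hv
      have hvn : v < n := by omega
      rw [dif_pos hvn, Finset.mem_range]
      exact hmap v hv hvn
    have hinjOn : Set.InjOn (fun v => if h : v < n then (σ.symm ⟨v, h⟩).val else 0)
        (Finset.range (j+1)) := by
      intro x hx y hy hxy
      rw [Finset.mem_coe, Finset.mem_range] at hx hy
      have hxn : x < n := by omega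
      have hyn : y < n := by omega
      simp only [dif_pos hxn, dif_pos hyn] at hxy
      have := σ.symm.injective (Fin.ext hxy)
      exact congrArg Fin.val this
    have hcic := Finset.card_le_card hsub
    rw [Finset.card_image_of_injOn hinjOn, Finset.card_range, Finset.card_range] at hcic
    omega
  -- suffix bounds
  have hsufmem : ∀ t, m ≤ (σ (P t)).val ∧ (σ (P t)).val ≤ n - k + j := by
    intro t
    refine ⟨hsufge t, ?_⟩
    have hle := S.le_max' _ (by rw [hS]; exact Finset.mem_image.mpr ⟨t, Finset.mem_univ _, rfl⟩)
    rw [← hM] at hle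
    omega
  -- define τ
  have hgmem : ∀ t : Fin (n-k), (σ (P t)).val - m < n - k := by
    intro t; have := hsufmem t; omega
  set g : Fin (n-k) → Fin (n-k) := fun t => ⟨(σ (P t)).val - m, hgmem t⟩ with hg
  have hginj : Function.Injective g := by
    intro x y hxy
    simp only [hg, Fin.mk.injEq] at hxy
    have h1 := hsufmem x
    have h2 := hsufmem y
    apply hvalinj
    show (σ (P x)).val = (σ (P y)).val
    omega
  set τ : Equiv.Perm (Fin (n-k)) := Equiv.ofBijective g (Finite.injective_iff_bijective.mp hginj) with hτ
  have hτapp : ∀ t, (τ t).val = (σ (P t)).val - m := fun t => rfl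
  clear_value τ
  refine ⟨j, hjk, τ, ?_, ?_, ?_⟩
  · rintro ⟨a, b, c, hab, hbc, h1, h2⟩
    rw [Fin.lt_def, hτapp, hτapp] at h1 h2
    have ma := hsufmem a
    have mb := hsufmem b
    have mc := hsufmem c
    exact h231 ⟨P a, P b, P c,
      Fin.lt_def.mpr (by show k + a.val < k + b.val; have := Fin.lt_def.mp hab; omega),
      Fin.lt_def.mpr (by show k + b.val < k + c.val; have := Fin.lt_def.mp hbc; omega),
      Fin.lt_def.mpr (by omega), Fin.lt_def.mpr (by omega)⟩
  · rintro ⟨a, b, c, d, hab, hbc, hcd, h1, h2, h3⟩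
    rw [Fin.lt_def, hτapp, hτapp] at h1 h2 h3
    have ma := hsufmem a
    have mb := hsufmem b
    have mc := hsufmem c
    have md := hsufmem d
    exact h3124 ⟨P a, P b, P c, P d,
      Fin.lt_def.mpr (by show k + a.val < k + b.val; have := Fin.lt_def.mp hab; omega),
      Fin.lt_def.mpr (by show k + b.val < k + c.val; have := Fin.lt_def.mp hbc; omega),
      Fin.lt_def.mpr (by show k + c.val < k + d.val; have := Fin.lt_def.mp hcd; omega),
      Fin.lt_def.mpr (by omega), Fin.lt_def.mpr (by omega), Fin.lt_def.mpr (by omega)⟩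
  · -- σ = permOf
    -- prefix values via strict antitonicity
    set f : Fin k → ℕ := fun p => (σ ⟨p.val, by omega⟩).val with hf
    set g2 : Fin k → ℕ := fun p => if p.val < k-1-j then n-1-p.val else k-1-p.val with hg2
    have hfanti : StrictAnti f := by
      intro p q hpq
      have := q.isLt
      exact hanti ⟨p.val, by omega⟩ ⟨q.val, by omega⟩ (Fin.lt_def.mp hpq)
        (by show q.val ≤ k - 1; omega)
    have hganti : StrictAnti g2 := by
      intro p q hpq
      have h1 := p.isLt
      have h2 := q.isLt
      have := Fin.lt_def.mp hpq
      simp only [hg2]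
      split_ifs <;> omega
    have houtS : ∀ v, v < n → (v ≤ j ∨ n-k+j < v) → v ∉ S := by
      intro v hvn hvj hvS
      rw [hSeq, Finset.mem_Icc] at hvS
      omega
    have hinS : ∀ v, v < n → ¬(v ≤ j ∨ n-k+j < v) → v ∈ S := by
      intro v hvn hvj
      push_neg at hvj
      exact hIccS (Finset.mem_Icc.mpr (by omega))
    have hrange : Set.range f = Set.range g2 := by
      ext v
      constructor
      · rintro ⟨p, rfl⟩
        have hfn : f p < n := (σ ⟨p.val, by omega⟩).isLt
        have hfnotS : f p ∉ S := hprenotS ⟨p.val, by omega⟩ p.isLt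
        have hout : f p ≤ j ∨ n-k+j < f p := by
          by_contra hcon
          push_neg at hcon
          exact hfnotS (hinS _ hfn (by omega))
        rcases hout with h | h
        · exact ⟨⟨k-1-(f p), by omega⟩, by simp only [hg2]; split_ifs <;> omega⟩
        · exact ⟨⟨n-1-(f p), by omega⟩, by simp only [hg2]; split_ifs <;> omega⟩
      · rintro ⟨p, rfl⟩
        have h1 := p.isLt
        have hvn : g2 p < n := by simp only [hg2]; split_ifs <;> omega
        have hvj : g2 p ≤ j ∨ n-k+j < g2 p := by simp only [hg2]; split_ifs <;> omega
        have hvS : g2 p ∉ S := houtS _ hvn hvj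
        set q := σ.symm ⟨g2 p, hvn⟩ with hq
        have hσq : σ q = ⟨g2 p, hvn⟩ := σ.apply_symm_apply _
        have hqk : q.val < k := by
          by_contra hge
          push_neg at hge
          have hqlt := q.isLt
          have hPq : P ⟨q.val - k, by omega⟩ = q := Fin.ext (by show k + (q.val - k) = q.val; omega)
          exact hvS (by
            rw [hS]
            exact Finset.mem_image.mpr ⟨⟨q.val - k, by omega⟩, Finset.mem_univ _, by rw [hPq, hσq]⟩)
        refine ⟨⟨q.val, hqk⟩, ?_⟩
        show (σ ⟨q.val, by omega⟩).val = g2 p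
        have : (⟨q.val, by omega⟩ : Fin n) = q := Fin.ext rfl
        rw [this, hσq]
    have hfg : f = g2 := (StrictAnti.range_inj hfanti hganti).mp hrange
    apply Equiv.ext
    intro i
    apply Fin.ext
    have hiin := i.isLt
    rcases Nat.lt_or_ge i.val k with hik | hik
    · have hr : ((permOf n k hk hkn j hjk τ) i).val = fwd n k j τ i.val := rfl
      rw [hr]
      have hl : (σ i).val = f ⟨i.val, hik⟩ := by
        simp only [hf]
      rw [hl, hfg]
      simp only [hg2]
      unfold fwd
      split_ifs <;> omega
    · have hPi : P ⟨i.val - k, by omega⟩ = i := Fin.ext (by show k + (i.val - k) = i.val; omega)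
      rw [permOf_suffix hk hkn hjk τ i hik]
      rw [hτapp]
      rw [hPi]
      have := hsufmem ⟨i.val - k, by omega⟩
      rw [hPi] at this
      omega

end Stmt18

namespace Stmt18

def pack (n k : ℕ) (hk : 1 ≤ k) (hkn : k < n)
    (x : Fin k × {τ : Equiv.Perm (Fin (n-k)) // Avoids231 τ ∧ Avoids3124 τ}) :
    {σ : Equiv.Perm (Fin n) //
      Avoids231 σ ∧ Avoids3124 σ ∧ σ ⟨k - 1, Nat.lt_of_le_of_lt (Nat.sub_le k 1) hkn⟩ = ⟨0, Nat.lt_of_le_of_lt (Nat.zero_le k) hkn⟩} :=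
  ⟨permOf n k hk hkn x.1.val x.1.isLt x.2.val,
    permOf_avoids231 hk hkn x.1.isLt x.2.val x.2.prop.1,
    permOf_avoids3124 hk hkn x.1.isLt x.2.val x.2.prop.2,
    permOf_at_kminus1 hk hkn x.1.isLt x.2.val⟩

lemma pack_bijective (n k : ℕ) (hk : 1 ≤ k) (hkn : k < n) :
    Function.Bijective (pack n k hk hkn) := by
  constructor
  · rintro ⟨j1, τ1⟩ ⟨j2, τ2⟩ h
    have heq : permOf n k hk hkn j1.val j1.isLt τ1.val
        = permOf n k hk hkn j2.val j2.isLt τ2.val := congrArg Subtype.val h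
    obtain ⟨hj, hτ⟩ := permOf_inj hk hkn j1.isLt j2.isLt heq
    exact Prod.ext (Fin.ext hj) (Subtype.ext hτ)
  · rintro ⟨σ, h1, h2, h3⟩
    obtain ⟨j, hj, τ, a1, a2, heq⟩ := structure_lemma hk hkn σ h1 h2 h3
    exact ⟨(⟨j, hj⟩, ⟨τ, a1, a2⟩), Subtype.ext heq.symm⟩

end Stmt18



/-- For `1 ≤ k < n`, the number of (231,3124)-avoiding permutations of `[n]`
with the value 1 in position `k` equals `k` times the number of
(231,3124)-avoiding permutations of `[n-k]`. (0-indexed: `σ (k-1) = 0`.) -/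
theorem stmt_18 (n k : ℕ) (hk : 1 ≤ k) (hkn : k < n) :
    Nat.card {σ : Equiv.Perm (Fin n) //
        Avoids231 σ ∧ Avoids3124 σ ∧ σ ⟨k - 1, by omega⟩ = ⟨0, by omega⟩} =
      k * Nat.card {σ : Equiv.Perm (Fin (n - k)) // Avoids231 σ ∧ Avoids3124 σ} := by
  have hcard := Nat.card_eq_of_bijective _ (Stmt18.pack_bijective n k hk hkn)
  rw [← hcard, Nat.card_prod]
  congr 1
  simp
end

section
/- If σ is a permutation of {1,...,n} avoiding 231 and 3124 with σ(k) = 1 for some 1 < k < n and σ(1) = n, then there exists j with 1 ≤ j ≤ k-1 such that σ = δ_j ⊖ (δ_{k-j} ⊕ σ'') for some permutation σ'' of {1,...,n-k} avoiding 231 and 3124, where δ_m denotes the decreasing permutation of length m. -/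
def directSum {m n : ℕ} (π : Equiv.Perm (Fin m)) (σ : Equiv.Perm (Fin n)) :
    Equiv.Perm (Fin (m + n)) :=
  finSumFinEquiv.symm.trans ((Equiv.sumCongr π σ).trans finSumFinEquiv)

def skewSum {m n : ℕ} (π : Equiv.Perm (Fin m)) (σ : Equiv.Perm (Fin n)) :
    Equiv.Perm (Fin (m + n)) :=
  finSumFinEquiv.symm.trans (((Equiv.sumCongr π σ).trans
    (Equiv.sumComm (Fin m) (Fin n))).trans
      (finSumFinEquiv.trans (finCongr (Nat.add_comm n m))))

def delta (m : ℕ) : Equiv.Perm (Fin m) := Fin.revPerm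

lemma skewSum_apply_nat {m n : ℕ} (π : Equiv.Perm (Fin m)) (ρ : Equiv.Perm (Fin n))
    (x : Fin (m+n)) :
    ((skewSum π ρ) x : ℕ) =
      if h : (x:ℕ) < m then n + (π ⟨x, h⟩ : ℕ) else ρ ⟨(x:ℕ) - m, by omega⟩ := by
  rcases x with ⟨x, hx⟩
  unfold skewSum
  by_cases h : x < m
  · have : finSumFinEquiv.symm ⟨x, hx⟩ = Sum.inl ⟨x, h⟩ := by
      rw [Equiv.symm_apply_eq]
      simp [finSumFinEquiv, Fin.castAdd, Fin.castLE]
    simp [this, h]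
    try omega
  · have : finSumFinEquiv.symm ⟨x, hx⟩ = Sum.inr ⟨x - m, by omega⟩ := by
      rw [Equiv.symm_apply_eq]
      simp [finSumFinEquiv, Fin.natAdd]
      omega
    simp [this, h]
    try omega

lemma directSum_apply_nat {m n : ℕ} (π : Equiv.Perm (Fin m)) (ρ : Equiv.Perm (Fin n))
    (x : Fin (m+n)) :
    ((directSum π ρ) x : ℕ) =
      if h : (x:ℕ) < m then (π ⟨x, h⟩ : ℕ) else m + (ρ ⟨(x:ℕ) - m, by omega⟩ : ℕ) := by
  rcases x with ⟨x, hx⟩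
  unfold directSum
  by_cases h : x < m
  · have : finSumFinEquiv.symm ⟨x, hx⟩ = Sum.inl ⟨x, h⟩ := by
      rw [Equiv.symm_apply_eq]
      simp [finSumFinEquiv, Fin.castAdd, Fin.castLE]
    simp [this, h]
    try omega
  · have : finSumFinEquiv.symm ⟨x, hx⟩ = Sum.inr ⟨x - m, by omega⟩ := by
      rw [Equiv.symm_apply_eq]
      simp [finSumFinEquiv, Fin.natAdd]
      omega
    simp [this, h]
    try omega

lemma delta_apply_nat (m : ℕ) (x : Fin m) : ((delta m) x : ℕ) = m - 1 - x := by
  simp [delta, Fin.val_rev]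
  omega

lemma count_lt {n : ℕ} (σ : Equiv.Perm (Fin n)) (a : Fin n) (S : Finset (Fin n))
    (h : ∀ m, σ m < σ a ↔ m ∈ S) : (σ a : ℕ) = S.card := by
  have him : S.image σ = Finset.Iio (σ a) := by
    ext y
    simp only [Finset.mem_image, Finset.mem_Iio]
    constructor
    · rintro ⟨m, hm, rfl⟩; exact (h m).2 hm
    · intro hy; exact ⟨σ.symm y, (h _).1 (by simpa using hy), by simp⟩
  calc (σ a : ℕ) = (Finset.Iio (σ a)).card := (Fin.card_Iio _).symm
    _ = (S.image σ).card := by rw [him]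
    _ = S.card := Finset.card_image_of_injective _ σ.injective

lemma count_gt {n : ℕ} (σ : Equiv.Perm (Fin n)) (a : Fin n) (S : Finset (Fin n))
    (h : ∀ m, σ a < σ m ↔ m ∈ S) : S.card = n - 1 - (σ a : ℕ) := by
  have him : S.image σ = Finset.Ioi (σ a) := by
    ext y
    simp only [Finset.mem_image, Finset.mem_Ioi]
    constructor
    · rintro ⟨m, hm, rfl⟩; exact (h m).2 hm
    · intro hy; exact ⟨σ.symm y, (h _).1 (by simpa using hy), by simp⟩
  calc S.card = (S.image σ).card := (Finset.card_image_of_injective _ σ.injective).symm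
    _ = (Finset.Ioi (σ a)).card := by rw [him]
    _ = n - 1 - (σ a : ℕ) := Fin.card_Ioi _

lemma addk_lt {n k : ℕ} (hkn : k < n) (t : Fin (n - k)) : k + (t : ℕ) < n := by
  have := t.isLt; omega

set_option maxHeartbeats 1000000 in
theorem stmt_19_aux (n k : ℕ) (hk1 : 1 < k) (hkn : k < n) (σ : Equiv.Perm (Fin n))
    (h1 : Avoids231 σ) (h2 : Avoids3124 σ)
    (hfirst : ∀ h : 0 < n, (σ ⟨0, h⟩ : ℕ) = n - 1)
    (hone : ∀ h : k - 1 < n, (σ ⟨k - 1, h⟩ : ℕ) = 0) :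
    ∃ (j : ℕ) (_ : 1 ≤ j ∧ j ≤ k - 1) (σ'' : Equiv.Perm (Fin (n - k))),
      Avoids231 σ'' ∧ Avoids3124 σ'' ∧
        ∀ pf : j + ((k - j) + (n - k)) = n,
          σ = (finCongr pf).permCongr
              (skewSum (delta j) (directSum (delta (k - j)) σ'')) := by
  classical
  have hinj : ∀ a b : Fin n, σ a = σ b → a = b := fun a b h => σ.injective h
  have hne : ∀ a b : Fin n, a ≠ b → (σ a : ℕ) ≠ (σ b : ℕ) := by
    intro a b hab h
    exact hab (hinj a b (Fin.ext h))
  have hlt : ∀ a b : Fin n, a ≠ b → (σ a : ℕ) ≤ σ b → (σ a : ℕ) < σ b := by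
    intro a b hab h
    exact lt_of_le_of_ne h (hne a b hab)
  obtain ⟨Km1, hKm1v, hKm1s⟩ : ∃ x : Fin n, (x:ℕ) = k - 1 ∧ (σ x : ℕ) = 0 :=
    ⟨⟨k - 1, by omega⟩, rfl, hone _⟩
  obtain ⟨Z, hZv, hZs⟩ : ∃ x : Fin n, (x:ℕ) = 0 ∧ (σ x : ℕ) = n - 1 :=
    ⟨⟨0, by omega⟩, rfl, hfirst _⟩
  obtain ⟨K, hKv⟩ : ∃ x : Fin n, (x:ℕ) = k := ⟨⟨k, hkn⟩, rfl⟩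
  have hzero : ∀ a : Fin n, a ≠ Km1 → 0 < (σ a : ℕ) := by
    intro a ha
    rcases Nat.eq_zero_or_pos (σ a : ℕ) with h | h
    · exact absurd (hinj a Km1 (Fin.ext (by rw [hKm1s]; exact h))) ha
    · exact h
  -- step 1: σ is strictly decreasing on positions 0 .. k-1
  have hdec : ∀ a b : Fin n, (a : ℕ) < b → (b : ℕ) < k → (σ b : ℕ) < σ a := by
    intro a b hab hbk
    have hane : a ≠ Km1 := by
      intro h; rw [h, hKm1v] at hab; omega
    have hap : 0 < (σ a : ℕ) := hzero a hane
    by_cases hb : (b : ℕ) = k - 1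
    · have hbeq : b = Km1 := Fin.ext (by rw [hb, hKm1v])
      rw [hbeq, hKm1s]
      exact hap
    · by_contra hcon
      push_neg at hcon
      have habne : a ≠ b := by intro h; rw [h] at hab; omega
      have hab' : (σ a : ℕ) < σ b := hlt a b habne hcon
      apply h1
      refine ⟨a, b, Km1, hab, ?_, ?_, hab'⟩
      · show (b : ℕ) < (Km1 : ℕ); omega
      · show (σ Km1 : ℕ) < (σ a : ℕ); rw [hKm1s]; exact hap
  -- step 2: each prefix entry is above or below all tail entries
  have hsplit : ∀ a : Fin n, (a : ℕ) < k →
      (∀ l : Fin n, k ≤ (l : ℕ) → (σ l : ℕ) < σ a) ∨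
      (∀ l : Fin n, k ≤ (l : ℕ) → (σ a : ℕ) < σ l) := by
    intro a hak
    by_contra hcon
    push_neg at hcon
    obtain ⟨⟨l₁, hl₁k, hl₁⟩, ⟨l₂, hl₂k, hl₂⟩⟩ := hcon
    have hal₁ : a ≠ l₁ := by intro h; rw [h] at hak; omega
    have hal₂ : a ≠ l₂ := by intro h; rw [h] at hak; omega
    have h₁ : (σ a : ℕ) < σ l₁ := hlt a l₁ hal₁ hl₁
    have h₂ : (σ l₂ : ℕ) < σ a := hlt l₂ a (fun h => hal₂ h.symm) hl₂
    have hl12 : (l₁ : ℕ) ≠ (l₂ : ℕ) := by intro h; have he : l₁ = l₂ := Fin.ext h; rw [he] at h₁; omega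
    have haK : a ≠ Km1 := by intro h; rw [h, hKm1s] at h₂; omega
    have hakm1 : (a : ℕ) < k - 1 := by
      have : (a : ℕ) ≠ k - 1 := fun h => haK (Fin.ext (by rw [h, hKm1v]))
      omega
    rcases lt_or_gt_of_ne hl12 with h | h
    · apply h1
      exact ⟨a, l₁, l₂, by omega, h, h₂, h₁⟩
    · apply h2
      have hl₂Km1 : (σ Km1 : ℕ) < σ l₂ := by
        rw [hKm1s]
        refine hzero l₂ fun hh => ?_
        rw [hh, hKm1v] at hl₂k; omega
      refine ⟨a, Km1, l₂, l₁, ?_, ?_, ?_, hl₂Km1, h₂, h₁⟩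
      · show (a : ℕ) < (Km1 : ℕ); omega
      · show (Km1 : ℕ) < (l₂ : ℕ); omega
      · show (l₂ : ℕ) < (l₁ : ℕ); omega
  -- step 3: define j
  have hKnotKm1 : K ≠ Km1 := by
    intro h; rw [h, hKm1v] at hKv; omega
  have hKpos : 0 < (σ K : ℕ) := hzero K hKnotKm1
  set Q : ℕ → Prop := fun i => ∃ h : i < n, (σ ⟨i, h⟩ : ℕ) < σ K with hQdef
  have hQ : ∃ i, Q i := by
    refine ⟨k - 1, by omega, ?_⟩
    have : (⟨k - 1, by omega⟩ : Fin n) = Km1 := Fin.ext (by simp [hKm1v])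
    rw [this, hKm1s]
    exact hKpos
  set j := Nat.find hQ with hjdef
  have hQj : Q j := Nat.find_spec hQ
  have hjmin : ∀ i, i < j → ¬ Q i := fun i hi => Nat.find_min hQ hi
  have hjk : j ≤ k - 1 := by
    apply Nat.find_min' hQ
    refine ⟨by omega, ?_⟩
    have : (⟨k - 1, by omega⟩ : Fin n) = Km1 := Fin.ext (by simp [hKm1v])
    rw [this, hKm1s]
    exact hKpos
  have hj1 : 1 ≤ j := by
    rcases Nat.eq_zero_or_pos j with h | h
    · exfalso
      obtain ⟨hh, hlt'⟩ := h ▸ hQj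
      have hZeq : (⟨0, hh⟩ : Fin n) = Z := Fin.ext (by rw [hZv])
      rw [hZeq, hZs] at hlt'
      have := (σ K).isLt; omega
    · exact h
  obtain ⟨hjn, hQjs⟩ := hQj
  obtain ⟨J, hJv, hJs⟩ : ∃ x : Fin n, (x:ℕ) = j ∧ (σ x : ℕ) < σ K :=
    ⟨⟨j, hjn⟩, rfl, hQjs⟩
  -- step 3': top and bottom blocks
  have htop : ∀ a : Fin n, (a : ℕ) < j → ∀ l : Fin n, k ≤ (l : ℕ) → (σ l : ℕ) < σ a := by
    intro a ha l hl
    rcases hsplit a (by omega) with hc | hc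
    · exact hc l hl
    · exfalso
      have h1' := hc K (by omega)
      have h2' := hjmin a (by omega)
      simp only [hQdef] at h2'
      push_neg at h2'
      have := h2' a.isLt
      simp only [Fin.eta] at this
      omega
  have hbot : ∀ a : Fin n, j ≤ (a : ℕ) → (a : ℕ) < k → ∀ l : Fin n, k ≤ (l : ℕ) →
      (σ a : ℕ) < σ l := by
    intro a haj hak l hl
    rcases hsplit a hak with hc | hc
    · exfalso
      have h1' := hc K (by omega)
      by_cases he : (a : ℕ) = j
      · have : a = J := Fin.ext (by omega)
        rw [this] at h1'; omega
      · have hja : (J : ℕ) < a := by omega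
        have := hdec J a hja hak
        omega
    · exact hc l hl
  -- step 4: value formulas
  have hvtop : ∀ a : Fin n, (a : ℕ) < j → (σ a : ℕ) = n - 1 - a := by
    intro a ha
    have hiff : ∀ m : Fin n, σ a < σ m ↔ m ∈ Finset.Iio a := by
      intro m
      rw [Finset.mem_Iio]
      constructor
      · intro hm
        rw [Fin.lt_def]
        by_contra hcon
        push_neg at hcon
        have hma : (a : ℕ) ≠ m := by
          intro h; have : a = m := Fin.ext h; rw [this] at hm; exact lt_irrefl _ hm
        by_cases hmk : (m : ℕ) < k
        · have := hdec a m (by omega) hmk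
          rw [Fin.lt_def] at hm; omega
        · have := htop a ha m (by omega)
          rw [Fin.lt_def] at hm; omega
      · intro hm
        rw [Fin.lt_def]
        exact hdec m a (by rw [Fin.lt_def] at hm; exact hm) (by omega)
    have hc := count_gt σ a _ hiff
    rw [Fin.card_Iio] at hc
    have := (σ a).isLt
    omega
  have hvbot : ∀ a : Fin n, j ≤ (a : ℕ) → (a : ℕ) < k → (σ a : ℕ) = k - 1 - a := by
    intro a haj hak
    have hiff : ∀ m : Fin n, σ m < σ a ↔ m ∈ Finset.Ioo a K := by
      intro m
      rw [Finset.mem_Ioo]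
      constructor
      · intro hm
        rw [Fin.lt_def] at hm
        constructor
        · rw [Fin.lt_def]
          by_contra hcon
          push_neg at hcon
          have hma : (m : ℕ) ≠ a := by
            intro h; have : m = a := Fin.ext h; rw [this] at hm; omega
          have := hdec m a (by omega) hak
          omega
        · rw [Fin.lt_def, hKv]
          by_contra hcon
          push_neg at hcon
          have := hbot a haj hak m hcon
          omega
      · rintro ⟨h1', h2'⟩
        rw [Fin.lt_def] at h1' h2' ⊢
        rw [hKv] at h2'
        exact hdec a m h1' h2'
    have hc := count_lt σ a _ hiff
    rw [Fin.card_Ioo] at hc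
    rw [hKv] at hc
    omega
  have hvlb : ∀ l : Fin n, k ≤ (l : ℕ) → k - j ≤ (σ l : ℕ) := by
    intro l hl
    have hsub : (Finset.Ico J K).image σ ⊆ Finset.Iio (σ l) := by
      intro y hy
      rw [Finset.mem_image] at hy
      obtain ⟨m, hm, rfl⟩ := hy
      rw [Finset.mem_Ico, Fin.le_def, Fin.lt_def, hJv, hKv] at hm
      rw [Finset.mem_Iio, Fin.lt_def]
      exact hbot m hm.1 hm.2 l hl
    have hcard := Finset.card_le_card hsub
    rw [Finset.card_image_of_injective _ σ.injective, Fin.card_Ico, Fin.card_Iio,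
      hJv, hKv] at hcard
    omega
  have hvub : ∀ l : Fin n, k ≤ (l : ℕ) → (σ l : ℕ) < n - j := by
    intro l hl
    have hsub : (Finset.Iio J).image σ ⊆ Finset.Ioi (σ l) := by
      intro y hy
      rw [Finset.mem_image] at hy
      obtain ⟨m, hm, rfl⟩ := hy
      rw [Finset.mem_Iio, Fin.lt_def, hJv] at hm
      rw [Finset.mem_Ioi, Fin.lt_def]
      exact htop m hm l hl
    have hcard := Finset.card_le_card hsub
    rw [Finset.card_image_of_injective _ σ.injective, Fin.card_Iio, Fin.card_Ioi,
      hJv] at hcard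
    have := (σ l).isLt
    omega
  -- step 5: construct σ''
  have hbnd : ∀ t : Fin (n - k), (σ ⟨k + t, addk_lt hkn t⟩ : ℕ) - (k - j) < n - k := by
    intro t
    have h1' := hvub ⟨k + t, addk_lt hkn t⟩ (by simp)
    have h2' := hvlb ⟨k + t, addk_lt hkn t⟩ (by simp)
    omega
  set g : Fin (n - k) → Fin (n - k) :=
    fun t => ⟨(σ ⟨k + t, addk_lt hkn t⟩ : ℕ) - (k - j), hbnd t⟩ with hgdef
  have ginj : Function.Injective g := by
    intro t t' h
    have h1' := hvlb ⟨k + t, addk_lt hkn t⟩ (by simp)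
    have h2' := hvlb ⟨k + t', addk_lt hkn t'⟩ (by simp)
    have hv : (g t : ℕ) = g t' := by rw [h]
    rw [hgdef] at hv
    simp only at hv
    have hσ : (σ ⟨k + t, addk_lt hkn t⟩ : ℕ) = σ ⟨k + t', addk_lt hkn t'⟩ := by omega
    have := hinj _ _ (Fin.ext hσ)
    rw [Fin.mk.injEq] at this
    exact Fin.ext (by omega)
  obtain ⟨σ'', happ⟩ : ∃ σ'' : Equiv.Perm (Fin (n - k)),
      ∀ t : Fin (n - k), (σ'' t : ℕ) = (σ ⟨k + t, addk_lt hkn t⟩ : ℕ) - (k - j) :=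
    ⟨Equiv.ofBijective g (Finite.injective_iff_bijective.mp ginj), fun t => rfl⟩
  -- step 5': avoidance
  have hA231 : Avoids231 σ'' := by
    rintro ⟨a, b, c, hab, hbc, hv1, hv2⟩
    rw [Fin.lt_def] at hab hbc hv1 hv2
    rw [happ, happ] at hv1 hv2
    have la := hvlb ⟨k + a, addk_lt hkn a⟩ (by simp)
    have lb := hvlb ⟨k + b, addk_lt hkn b⟩ (by simp)
    have lc := hvlb ⟨k + c, addk_lt hkn c⟩ (by simp)
    apply h1
    refine ⟨⟨k + a, addk_lt hkn a⟩, ⟨k + b, addk_lt hkn b⟩, ⟨k + c, addk_lt hkn c⟩, ?_, ?_, ?_, ?_⟩ <;>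
      simp only [Fin.lt_def] <;> omega
  have hA3124 : Avoids3124 σ'' := by
    rintro ⟨a, b, c, d, hab, hbc, hcd, hv1, hv2, hv3⟩
    rw [Fin.lt_def] at hab hbc hcd hv1 hv2 hv3
    rw [happ, happ] at hv1 hv2 hv3
    have la := hvlb ⟨k + a, addk_lt hkn a⟩ (by simp)
    have lb := hvlb ⟨k + b, addk_lt hkn b⟩ (by simp)
    have lc := hvlb ⟨k + c, addk_lt hkn c⟩ (by simp)
    have ld := hvlb ⟨k + d, addk_lt hkn d⟩ (by simp)
    apply h2
    refine ⟨⟨k + a, addk_lt hkn a⟩, ⟨k + b, addk_lt hkn b⟩, ⟨k + c, addk_lt hkn c⟩,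
      ⟨k + d, addk_lt hkn d⟩, ?_, ?_, ?_, ?_, ?_, ?_⟩ <;>
      simp only [Fin.lt_def] <;> omega
  -- step 6: conclusion
  refine ⟨j, ⟨hj1, hjk⟩, σ'', hA231, hA3124, ?_⟩
  intro pf
  refine Equiv.ext fun x => Fin.ext ?_
  simp only [Equiv.permCongr_apply, finCongr_symm, finCongr_apply, Fin.coe_cast]
  rw [skewSum_apply_nat]
  simp only [Fin.coe_cast]
  by_cases hx1 : (x : ℕ) < j
  · rw [dif_pos hx1, delta_apply_nat]
    simp only
    rw [hvtop x hx1]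
    omega
  · rw [dif_neg hx1, directSum_apply_nat]
    by_cases hx2 : (x : ℕ) < k
    · rw [dif_pos (show (x : ℕ) - j < k - j by omega), delta_apply_nat]
      simp only
      rw [hvbot x (by omega) hx2]
      omega
    · rw [dif_neg (show ¬ ((x : ℕ) - j < k - j) by omega)]
      rw [happ]
      have hxeq : (⟨k + ((x : ℕ) - j - (k - j)), addk_lt hkn ⟨(x : ℕ) - j - (k - j), by omega⟩⟩ : Fin n) = x :=
        Fin.ext (by simp only; omega)
      rw [hxeq]
      have := hvlb x (by omega)
      omega

/-- If `σ` is a (231,3124)-avoiding permutation of `[n]` with `σ(1) = n` and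
`σ(k) = 1` for some `1 < k < n`, then `σ = δ_j ⊖ (δ_{k-j} ⊕ σ'')` for some
`1 ≤ j ≤ k-1` and some (231,3124)-avoiding permutation `σ''` of `[n-k]`. -/
theorem stmt_19 (n k : ℕ) (hk1 : 1 < k) (hkn : k < n) (σ : Equiv.Perm (Fin n))
    (h1 : Avoids231 σ) (h2 : Avoids3124 σ)
    (hfirst : (σ ⟨0, by omega⟩ : ℕ) = n - 1)
    (hone : (σ ⟨k - 1, by omega⟩ : ℕ) = 0) :
    ∃ (j : ℕ) (hj : 1 ≤ j ∧ j ≤ k - 1) (σ'' : Equiv.Perm (Fin (n - k))),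
      Avoids231 σ'' ∧ Avoids3124 σ'' ∧
        σ = (finCongr (show j + ((k - j) + (n - k)) = n by omega)).permCongr
              (skewSum (delta j) (directSum (delta (k - j)) σ'')) :=
  (stmt_19_aux n k hk1 hkn σ h1 h2 (fun _ => hfirst) (fun _ => hone)).elim fun j hrest =>
    hrest.elim fun hj hrest2 =>
      hrest2.elim fun σ'' hσ =>
        ⟨j, hj, σ'', hσ.1, hσ.2.1, hσ.2.2 _⟩
end
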